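/- arXiv:0903.0316 — 10 statements merged into one kernel-verified Lean document; each statement's English description precedes it below -/
import Mathlib

section
/- Let α,β,γ,δ,k,l be integers with k,l ≥ 0, with (α,β) and (γ,δ) not ordered (i.e. either α<γ and β>δ, or α>γ and β<δ). If k−l = 0 or k−l = (α−γ)+(δ−β), then [(α−k)−(γ−l)]^+ + [(β+k)−(δ+l)]^+ = [α−γ]^+ + [β−δ]^+. -/
theorem stmt6 (α β γ δ k l : ℤ) (hk : 0 ≤ k) (hl : 0 ≤ l)
    (hno : (α < γ ∧ δ < β) ∨ (γ < α ∧ β < δ))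
    (hkl : k - l = 0 ∨ k - l = (α - γ) + (δ - β)) :
    max ((α - k) - (γ - l)) 0 + max ((β + k) - (δ + l)) 0
      = max (α - γ) 0 + max (β - δ) 0 := by rcases hkl with h|h <;> rcases hno <;> omega
end

section
/- Let (Γ_k)_{k≥1} and (Γ'_l)_{l≥1} be summable sequences of nonnegative reals with partial tails Σ_k = Σ_{k'>k} Γ_{k'} and Σ'_l = Σ_{l'>l} Γ'_{l'}. For positive k,l define G(k,l) = (Γ_k − Γ_k ∧ (Σ'_l − Σ_k ∧ Σ'_l)) ∧ (Γ'_l − Γ'_l ∧ (Σ_k − Σ_k ∧ Σ'_l)), G(k,0) = Γ_k − Γ_k ∧ (Σ'_0 − Σ_k ∧ Σ'_0), G(0,l) = Γ'_l − Γ'_l ∧ (Σ_0 − Σ_0 ∧ Σ'_l), G(0,0) = 0. Then for every k ≥ 1, Σ_{l≥0} G(k,l) = Γ_k, and for every l ≥ 1, Σ_{k≥0} G(k,l) = Γ'_l. -/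
open Filter Topology

private lemma min2 (a b g : ℝ) (hg : 0 ≤ g) :
    min (a + g) b - min a b = min g (b - min a b) := by
  simp only [min_def]; split_ifs <;> linarith

private lemma min4 (a b g g' : ℝ) (hg : 0 ≤ g) (hg' : 0 ≤ g') :
    min (g - min g (b - min a b)) (g' - min g' (a - min a b))
      = (min (a + g) (b + g') - min a (b + g'))
        - (min (a + g) b - min a b) := by
  simp only [min_def]; split_ifs <;> linarith

private lemma tail_eq (Γ : ℕ → ℝ) (k : ℕ) :
    (∑' k' : ℕ, if k < k' then Γ k' else 0) = ∑' i : ℕ, Γ (i + (k + 1)) := by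
  have hinj : Function.Injective (fun i : ℕ => i + (k + 1)) := fun a b h => by simpa using h
  have := hinj.tsum_eq (f := fun k' => if k < k' then Γ k' else 0) ?_
  · rw [← this]
    refine tsum_congr fun i => ?_
    have h : k < i + (k + 1) := by omega
    simp [h]
  · intro x hx
    rcases le_or_gt x k with h | h
    · simp [Function.support, Nat.not_lt.2 h] at hx
    · exact ⟨x - (k + 1), show x - (k + 1) + (k + 1) = x by omega⟩

private lemma tail_succ (Γ : ℕ → ℝ) (hsum : Summable Γ) (Sa : ℕ → ℝ)
    (hSa : ∀ k, Sa k = ∑' k' : ℕ, if k < k' then Γ k' else 0) (k : ℕ) :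
    Sa k = Γ (k + 1) + Sa (k + 1) := by
  rw [hSa, hSa, tail_eq, tail_eq]
  have hs : Summable fun i : ℕ => Γ (i + (k + 1)) := (summable_nat_add_iff (k + 1)).2 hsum
  rw [Summable.tsum_eq_zero_add hs]
  simp only [zero_add]
  congr 1
  refine tsum_congr fun i => ?_
  congr 1
  omega

private lemma tail_nonneg (Γ : ℕ → ℝ) (hΓ : ∀ k, 0 ≤ Γ k) (Sa : ℕ → ℝ)
    (hSa : ∀ k, Sa k = ∑' k' : ℕ, if k < k' then Γ k' else 0) (k : ℕ) :
    0 ≤ Sa k := by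
  rw [hSa]
  exact tsum_nonneg fun k' => by by_cases h : k < k' <;> simp [h, hΓ]

private lemma tail_tendsto (Γ : ℕ → ℝ) (Sa : ℕ → ℝ)
    (hSa : ∀ k, Sa k = ∑' k' : ℕ, if k < k' then Γ k' else 0) :
    Tendsto Sa atTop (𝓝 0) := by
  have h1 : Tendsto (fun n : ℕ => ∑' i : ℕ, Γ (i + n)) atTop (𝓝 0) :=
    tendsto_sum_nat_add Γ
  have h2 : Tendsto (fun k : ℕ => k + 1) atTop atTop := tendsto_add_atTop_nat 1
  have := h1.comp h2
  refine this.congr fun k => ?_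
  simp only [Function.comp]
  rw [hSa, tail_eq]

/-- Auxiliary lemma: the first marginal is correct. -/
private lemma marginal (Γ Γ' : ℕ → ℝ) (hΓ : ∀ k, 0 ≤ Γ k) (hΓ' : ∀ l, 0 ≤ Γ' l)
    (hsum : Summable Γ) (hsum' : Summable Γ')
    (Sa Sb : ℕ → ℝ)
    (hSa : ∀ k, Sa k = ∑' k' : ℕ, if k < k' then Γ k' else 0)
    (hSb : ∀ l, Sb l = ∑' l' : ℕ, if l < l' then Γ' l' else 0)
    (G : ℕ → ℕ → ℝ)
    (hG : ∀ k l, 1 ≤ k → 1 ≤ l → G k l =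
      min (Γ k - min (Γ k) (Sb l - min (Sa k) (Sb l)))
          (Γ' l - min (Γ' l) (Sa k - min (Sa k) (Sb l))))
    (hGk0 : ∀ k, 1 ≤ k → G k 0 = Γ k - min (Γ k) (Sb 0 - min (Sa k) (Sb 0))) :
    ∀ k, 1 ≤ k → ∑' l : ℕ, G k l = Γ k := by
  intro k hk
  obtain ⟨K, rfl⟩ : ∃ K, k = K + 1 := ⟨k - 1, by omega⟩
  set k := K + 1
  -- F l = min (Sa K) (Sb l) - min (Sa k) (Sb l)
  set F : ℕ → ℝ := fun l => min (Sa K) (Sb l) - min (Sa k) (Sb l) with hF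
  have hSaK : Sa K = Sa k + Γ k := by
    rw [tail_succ Γ hsum Sa hSa K]; ring
  -- step 1 : G k (l+1) = F l - F (l+1)
  have hstep : ∀ l : ℕ, G k (l + 1) = F l - F (l + 1) := by
    intro l
    have hSbl : Sb l = Sb (l + 1) + Γ' (l + 1) := by
      rw [tail_succ Γ' hsum' Sb hSb l]; ring
    rw [hG k (l + 1) hk (by omega)]
    have := min4 (Sa k) (Sb (l + 1)) (Γ k) (Γ' (l + 1)) (hΓ k) (hΓ' (l + 1))
    simp only [hF, hSaK, hSbl]
    linarith [this]
  -- F tends to 0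
  have hFlim : Tendsto F atTop (𝓝 0) := by
    have hSb0 : Tendsto Sb atTop (𝓝 0) := tail_tendsto Γ' Sb hSb
    have h1 : Tendsto (fun l => min (Sa K) (Sb l)) atTop (𝓝 (min (Sa K) 0)) :=
      tendsto_const_nhds.min hSb0
    have h2 : Tendsto (fun l => min (Sa k) (Sb l)) atTop (𝓝 (min (Sa k) 0)) :=
      tendsto_const_nhds.min hSb0
    have := h1.sub h2
    rw [min_eq_right (tail_nonneg Γ hΓ Sa hSa K), min_eq_right (tail_nonneg Γ hΓ Sa hSa k),
      sub_self] at this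
    exact this
  -- summability of (fun l => G k (l+1)) via comparison with Γ'
  have hnonneg : ∀ l : ℕ, 0 ≤ G k (l + 1) := by
    intro l
    rw [hG k (l + 1) hk (by omega)]
    refine le_min (by simp [sub_nonneg, min_le_left]) (by simp [sub_nonneg, min_le_left])
  have hle : ∀ l : ℕ, G k (l + 1) ≤ Γ' (l + 1) := by
    intro l
    rw [hG k (l + 1) hk (by omega)]
    refine (min_le_right _ _).trans ?_
    have : 0 ≤ min (Γ' (l + 1)) (Sa k - min (Sa k) (Sb (l + 1))) := by
      refine le_min (hΓ' _) (by simp [sub_nonneg, min_le_left])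
    linarith
  have hsumm : Summable fun l : ℕ => G k (l + 1) := by
    refine Summable.of_nonneg_of_le hnonneg hle ?_
    exact (summable_nat_add_iff 1).2 hsum'
  -- identify the sum of the shifted series with F 0
  have htsum : ∑' l : ℕ, G k (l + 1) = F 0 := by
    have h1 : Tendsto (fun n : ℕ => ∑ l ∈ Finset.range n, G k (l + 1)) atTop
        (𝓝 (∑' l : ℕ, G k (l + 1))) := hsumm.hasSum.tendsto_sum_nat
    have h2 : Tendsto (fun n : ℕ => ∑ l ∈ Finset.range n, G k (l + 1)) atTop (𝓝 (F 0)) := by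
      have heq : ∀ n : ℕ, ∑ l ∈ Finset.range n, G k (l + 1) = F 0 - F n := by
        intro n
        rw [← Finset.sum_range_sub' F n]
        exact Finset.sum_congr rfl fun l _ => hstep l
      have : Tendsto (fun n : ℕ => F 0 - F n) atTop (𝓝 (F 0 - 0)) :=
        tendsto_const_nhds.sub hFlim
      rw [sub_zero] at this
      exact this.congr fun n => (heq n).symm
    exact tendsto_nhds_unique h1 h2
  have hsummG : Summable fun l : ℕ => G k l := (summable_nat_add_iff 1).1 hsumm
  rw [Summable.tsum_eq_zero_add hsummG, htsum, hGk0 k hk]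
  have hF0 : F 0 = min (Γ k) (Sb 0 - min (Sa k) (Sb 0)) := by
    have := min2 (Sa k) (Sb 0) (Γ k) (hΓ k)
    simp only [hF, hSaK]
    linarith
  rw [hF0]; ring

/-- The coupling rates defined by the min-formulas have the correct marginals. -/
theorem stmt7 (Γ Γ' : ℕ → ℝ) (hΓ : ∀ k, 0 ≤ Γ k) (hΓ' : ∀ l, 0 ≤ Γ' l)
    (hsum : Summable Γ) (hsum' : Summable Γ')
    (Sa Sb : ℕ → ℝ)
    (hSa : ∀ k, Sa k = ∑' k' : ℕ, if k < k' then Γ k' else 0)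
    (hSb : ∀ l, Sb l = ∑' l' : ℕ, if l < l' then Γ' l' else 0)
    (G : ℕ → ℕ → ℝ)
    (hG : ∀ k l, 1 ≤ k → 1 ≤ l → G k l =
      min (Γ k - min (Γ k) (Sb l - min (Sa k) (Sb l)))
          (Γ' l - min (Γ' l) (Sa k - min (Sa k) (Sb l))))
    (hGk0 : ∀ k, 1 ≤ k → G k 0 = Γ k - min (Γ k) (Sb 0 - min (Sa k) (Sb 0)))
    (hG0l : ∀ l, 1 ≤ l → G 0 l = Γ' l - min (Γ' l) (Sa 0 - min (Sa 0) (Sb l)))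
    (hG00 : G 0 0 = 0) :
    (∀ k, 1 ≤ k → ∑' l : ℕ, G k l = Γ k) ∧
    (∀ l, 1 ≤ l → ∑' k : ℕ, G k l = Γ' l) := by
  constructor
  · exact marginal Γ Γ' hΓ hΓ' hsum hsum' Sa Sb hSa hSb G hG hGk0
  · refine marginal Γ' Γ hΓ' hΓ hsum' hsum Sb Sa hSb hSa (fun l k => G k l) ?_ ?_
    · intro l k hl hk
      show G k l = _
      rw [hG k l hk hl, min_comm (Sa k) (Sb l), min_comm]
    · intro l hl
      show G 0 l = _
      rw [hG0l l hl, min_comm (Sa 0) (Sb l)]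
end

section
/- With notation as above (summable nonnegative sequences Γ, Γ' with tails Σ, Σ', and coupling rates G defined via the min-formulas), for positive k and l ≥ 0 one has Σ_{l'>l} G(k,l') = Γ_k ∧ (Σ'_l − Σ_k ∧ Σ'_l), and for k ≥ 0 and positive l one has Σ_{k'>k} G(k',l) = (Σ_k − Σ_k ∧ Σ'_l) ∧ Γ'_l. -/
open Filter Finset

lemma ite_nonneg' (Γ : ℕ → ℝ) (hΓ : ∀ k, 0 ≤ Γ k) (p : ℕ → Prop) [DecidablePred p] :
    ∀ l, 0 ≤ if p l then Γ l else 0 := by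
  intro l; split_ifs; exacts [hΓ l, le_rfl]

lemma tail_facts (Γ : ℕ → ℝ) (hΓ : ∀ k, 0 ≤ Γ k) (hsum : Summable Γ)
    (S : ℕ → ℝ) (hS : ∀ k, S k = ∑' k' : ℕ, if k < k' then Γ k' else 0) :
    (∀ k, 0 ≤ S k) ∧ (∀ k, S k = Γ (k+1) + S (k+1)) ∧
      Tendsto S atTop (nhds 0) := by
  have hle : ∀ (p : ℕ → Prop) [DecidablePred p] (l : ℕ), (if p l then Γ l else 0) ≤ Γ l := by
    intro p _ l; split_ifs; exacts [le_rfl, hΓ l]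
  have hsummable : ∀ k : ℕ, Summable (fun k' => if k < k' then Γ k' else 0) := fun k =>
    hsum.of_nonneg_of_le (ite_nonneg' Γ hΓ _) (hle _)
  refine ⟨fun k => ?_, fun k => ?_, ?_⟩
  · rw [hS k]; exact tsum_nonneg (ite_nonneg' Γ hΓ _)
  · have e1 : (fun k' => if k < k' then Γ k' else 0)
        = fun k' => (if k' = k + 1 then Γ (k+1) else 0) + (if k + 1 < k' then Γ k' else 0) := by
      funext x; split_ifs with h1 h2 h3 <;> first | omega | subst h2; ring | ring
    have hs1 : Summable (fun k' : ℕ => if k' = k + 1 then Γ (k+1) else 0) :=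
      summable_of_ne_finset_zero (s := {k+1}) (by intro b hb; simp at hb; simp [hb])
    rw [hS k, hS (k+1), e1, Summable.tsum_add hs1 (hsummable (k+1)), tsum_ite_eq]
  · have key : ∀ k, S k = (∑' i, Γ i) - ∑ i ∈ Finset.range (k+1), Γ i := by
      intro k
      have e2 : ∀ x : ℕ, (if x < k + 1 then Γ x else 0) + (if k < x then Γ x else 0) = Γ x := by
        intro x; split_ifs <;> first | omega | ring
      have hs2 : Summable (fun x : ℕ => if x < k + 1 then Γ x else 0) :=
        hsum.of_nonneg_of_le (ite_nonneg' Γ hΓ _) (hle _)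
      have h4 : (∑' x : ℕ, if x < k + 1 then Γ x else 0) + S k = ∑' i, Γ i := by
        rw [hS k, ← Summable.tsum_add hs2 (hsummable k)]
        exact tsum_congr e2
      have e3 : (∑' x : ℕ, if x < k + 1 then Γ x else 0) = ∑ i ∈ Finset.range (k+1), Γ i := by
        rw [tsum_eq_sum (s := Finset.range (k+1)) (by intro b hb; simp at hb; simp [hb])]
        exact Finset.sum_congr rfl (fun i hi => by simp at hi; simp [hi])
      linarith [h4, e3]
    have : Tendsto (fun k => (∑' i, Γ i) - ∑ i ∈ Finset.range (k+1), Γ i) atTop (nhds 0) := by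
      have h5 := hsum.hasSum.tendsto_sum_nat
      have h6 : Tendsto (fun k : ℕ => ∑ i ∈ Finset.range (k+1), Γ i) atTop (nhds (∑' i, Γ i)) :=
        h5.comp (tendsto_add_atTop_nat 1)
      have h7 := (tendsto_const_nhds (x := ∑' i, Γ i) (f := atTop (α := ℕ))).sub h6
      simpa using h7
    exact this.congr (fun k => (key k).symm)


lemma keymin (a b c g : ℝ) (ha : 0 ≤ a) (hb : 0 ≤ b) (hc : 0 ≤ c) (hg : 0 ≤ g) :
    min (c - min c (b - min a b)) (g - min g (a - min a b))
      = min c (b + g - min a (b + g)) - min c (b - min a b) := by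
  rcases le_total a b with h | h <;> rcases le_total a (b + g) with h2 | h2 <;>
    simp only [min_def] <;> split_ifs <;> linarith

lemma aux8 (Γ Γ' : ℕ → ℝ) (hΓ : ∀ k, 0 ≤ Γ k) (hΓ' : ∀ l, 0 ≤ Γ' l)
    (Sa Sb : ℕ → ℝ) (hSa0 : ∀ k, 0 ≤ Sa k) (hSb0 : ∀ l, 0 ≤ Sb l)
    (hSbrec : ∀ l, Sb l = Γ' (l+1) + Sb (l+1))
    (hSbtend : Tendsto Sb atTop (nhds 0))
    (G : ℕ → ℕ → ℝ)
    (hG : ∀ k l, 1 ≤ k → 1 ≤ l → G k l =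
      min (Γ k - min (Γ k) (Sb l - min (Sa k) (Sb l)))
          (Γ' l - min (Γ' l) (Sa k - min (Sa k) (Sb l))))
    (k l : ℕ) (hk : 1 ≤ k) :
    (∑' l' : ℕ, if l < l' then G k l' else 0) = min (Γ k) (Sb l - min (Sa k) (Sb l)) := by
  set f : ℕ → ℝ := fun m => min (Γ k) (Sb m - min (Sa k) (Sb m)) with hf
  have hGtel : ∀ m : ℕ, G k (m+1) = f m - f (m+1) := by
    intro m
    rw [hG k (m+1) hk (Nat.le_add_left 1 m)]
    simp only [hf]
    rw [hSbrec m, show Γ' (m+1) + Sb (m+1) = Sb (m+1) + Γ' (m+1) from add_comm _ _]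
    exact keymin (Sa k) (Sb (m+1)) (Γ k) (Γ' (m+1)) (hSa0 k) (hSb0 (m+1)) (hΓ k) (hΓ' (m+1))
  have hGnonneg : ∀ m : ℕ, 0 ≤ G k (m+1) := by
    intro m
    rw [hG k (m+1) hk (Nat.le_add_left 1 m)]
    exact le_min (by simp [min_le_left]) (by simp [min_le_left])
  have hfnonneg : ∀ m, 0 ≤ f m :=
    fun m => le_min (hΓ k) (sub_nonneg.2 (min_le_right _ _))
  have hfle : ∀ m, f m ≤ Sb m := by
    intro m
    refine (min_le_right _ _).trans ?_
    have : 0 ≤ min (Sa k) (Sb m) := le_min (hSa0 k) (hSb0 m)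
    linarith
  have hftend : Tendsto f atTop (nhds 0) := squeeze_zero hfnonneg hfle hSbtend
  -- HasSum of shifted series
  have hshift : HasSum (fun i : ℕ => G k (i + (l + 1))) (f l) := by
    refine (hasSum_iff_tendsto_nat_of_nonneg (fun i => hGnonneg (i + l)) (f l)).2 ?_
    have hps : ∀ n : ℕ, ∑ i ∈ Finset.range n, G k (i + (l + 1)) = f l - f (n + l) := by
      intro n
      have : ∀ i ∈ Finset.range n, G k (i + (l+1)) = (fun j => f (j + l)) i - (fun j => f (j + l)) (i + 1) := by
        intro i _
        have : i + (l + 1) = (i + l) + 1 := by omega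
        rw [this, hGtel (i + l)]
        simp only []
        congr 2
        omega
      rw [Finset.sum_congr rfl this, Finset.sum_range_sub' (fun j => f (j + l)) n]
      simp
    have h1 : Tendsto (fun n : ℕ => f (n + l)) atTop (nhds 0) :=
      hftend.comp (tendsto_add_atTop_nat l)
    have h2 := (tendsto_const_nhds (x := f l) (f := atTop (α := ℕ))).sub h1
    simp only [sub_zero] at h2
    exact Tendsto.congr (fun n => (hps n).symm) h2
  have hinj : Function.Injective (fun i : ℕ => i + (l + 1)) := fun a b h => by simp only [] at h; omega
  have hzero : ∀ x ∉ Set.range (fun i : ℕ => i + (l + 1)),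
      (if l < x then G k x else 0) = 0 := by
    intro x hx
    have : ¬ l < x := by
      intro h
      exact hx ⟨x - (l+1), by simp only []; omega⟩
    simp [this]
  have hmain : HasSum (fun l' : ℕ => if l < l' then G k l' else 0) (f l) := by
    rw [← hinj.hasSum_iff hzero]
    have : ((fun l' : ℕ => if l < l' then G k l' else 0) ∘ fun i : ℕ => i + (l + 1))
        = fun i : ℕ => G k (i + (l + 1)) := by
      funext i
      simp only [Function.comp]
      rw [if_pos (by omega)]
    rw [this]
    exact hshift
  exact hmain.tsum_eq


/-- Partial tail sums of the coupling rates. -/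
theorem stmt8 (Γ Γ' : ℕ → ℝ) (hΓ : ∀ k, 0 ≤ Γ k) (hΓ' : ∀ l, 0 ≤ Γ' l)
    (hsum : Summable Γ) (hsum' : Summable Γ')
    (Sa Sb : ℕ → ℝ)
    (hSa : ∀ k, Sa k = ∑' k' : ℕ, if k < k' then Γ k' else 0)
    (hSb : ∀ l, Sb l = ∑' l' : ℕ, if l < l' then Γ' l' else 0)
    (G : ℕ → ℕ → ℝ)
    (hG : ∀ k l, 1 ≤ k → 1 ≤ l → G k l =
      min (Γ k - min (Γ k) (Sb l - min (Sa k) (Sb l)))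
          (Γ' l - min (Γ' l) (Sa k - min (Sa k) (Sb l))))
    (hGk0 : ∀ k, 1 ≤ k → G k 0 = Γ k - min (Γ k) (Sb 0 - min (Sa k) (Sb 0)))
    (hG0l : ∀ l, 1 ≤ l → G 0 l = Γ' l - min (Γ' l) (Sa 0 - min (Sa 0) (Sb l)))
    (hG00 : G 0 0 = 0) :
    (∀ k l : ℕ, 1 ≤ k →
      (∑' l' : ℕ, if l < l' then G k l' else 0)
        = min (Γ k) (Sb l - min (Sa k) (Sb l))) ∧
    (∀ k l : ℕ, 1 ≤ l →
      (∑' k' : ℕ, if k < k' then G k' l else 0)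
        = min (Sa k - min (Sa k) (Sb l)) (Γ' l)) := by
  obtain ⟨hSa0, hSarec, hSatend⟩ := tail_facts Γ hΓ hsum Sa hSa
  obtain ⟨hSb0, hSbrec, hSbtend⟩ := tail_facts Γ' hΓ' hsum' Sb hSb
  constructor
  · intro k l hk
    exact aux8 Γ Γ' hΓ hΓ' Sa Sb hSa0 hSb0 hSbrec hSbtend G hG k l hk
  · intro k l hl
    have hG2 : ∀ a b : ℕ, 1 ≤ a → 1 ≤ b → G b a =
        min (Γ' a - min (Γ' a) (Sa b - min (Sb a) (Sa b)))
            (Γ b - min (Γ b) (Sb a - min (Sb a) (Sa b))) := by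
      intro a b ha hb
      rw [hG b a hb ha, min_comm (Sa b) (Sb a)]
      exact min_comm _ _
    have h := aux8 Γ' Γ hΓ' hΓ Sb Sa hSb0 hSa0 hSarec hSatend
      (fun a b => G b a) hG2 l k hl
    rw [h, min_comm (Sb l) (Sa k)]
    exact min_comm _ _
end

section
/- With Γ, Γ', Σ, Σ', G as above, for all k, l ≥ 0 the coupling rates satisfy the recursion: for k,l ≥ 1, G(k,l) = (Γ_k − Σ_{l'>l} G(k,l')) ∧ (Γ'_l − Σ_{k'>k} G(k',l)); G(0,l) = Γ'_l − Σ_{k'>0} G(k',l); G(k,0) = Γ_k − Σ_{l'>0} G(k,l'); G(0,0) = 0. -/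
open Filter

private lemma msub (s t : ℝ) : t - min s t = max (t - s) 0 := by
  rcases le_total s t with h | h <;> simp [min_def, max_def] <;> split_ifs <;> linarith

private lemma keyid (A B s t : ℝ) (hA : 0 ≤ A) (hB : 0 ≤ B) :
    min (A - min A (max (t - s) 0)) (B - min B (max (s - t) 0))
      = min A (max (t + B - s) 0) - min A (max (t - s) 0) := by
  simp only [min_def, max_def]
  split_ifs <;> linarith

/-- Telescoping tail sum. -/
private lemma tele (F f : ℕ → ℝ) (l : ℕ)
    (hstep : ∀ m, F (m + 1) = f m - f (m + 1))
    (hmono : ∀ m, f (m + 1) ≤ f m)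
    (hlim : Tendsto f atTop (nhds 0)) :
    HasSum (fun i => if l < i then F i else 0) (f l) := by
  set h : ℕ → ℝ := fun i => if l < i then F i else 0 with hh
  have hnn : ∀ i, 0 ≤ h i := by
    intro i
    simp only [hh]
    split_ifs with hi
    · obtain ⟨m, rfl⟩ : ∃ m, i = m + 1 := ⟨i - 1, by omega⟩
      rw [hstep m]; linarith [hmono m]
    · exact le_refl 0
  rw [hasSum_iff_tendsto_nat_of_nonneg hnn]
  have hpart : ∀ n, ∑ i ∈ Finset.range (n + (l + 1)), h i = f l - f (n + l) := by
    intro n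
    induction n with
    | zero =>
      simp only [Nat.zero_add]
      rw [sub_self]
      apply Finset.sum_eq_zero
      intro i hi
      simp only [hh]
      rw [if_neg]
      simp only [Finset.mem_range] at hi
      omega
    | succ n ih =>
      have he : n + 1 + (l + 1) = (n + (l + 1)) + 1 := by omega
      rw [he, Finset.sum_range_succ, ih]
      have hlt : l < n + (l + 1) := by omega
      have h3 : h (n + (l + 1)) = F (n + l + 1) := by
        simp only [hh]; rw [if_pos hlt]; congr 1
      rw [h3, hstep (n + l)]
      have h4 : n + 1 + l = n + l + 1 := by omega
      rw [h4]; ring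
  rw [← Filter.tendsto_add_atTop_iff_nat (l + 1)]
  have h2 : Tendsto (fun n : ℕ => f l - f (n + l)) atTop (nhds (f l)) := by
    have : Tendsto (fun n : ℕ => f (n + l)) atTop (nhds 0) :=
      (Filter.tendsto_add_atTop_iff_nat l).2 hlim
    simpa using tendsto_const_nhds.sub this
  exact h2.congr fun n => (hpart n).symm

private lemma tail_repr (Γ : ℕ → ℝ) (hΓ : ∀ k, 0 ≤ Γ k) (hsum : Summable Γ) (l : ℕ) :
    (∑' k' : ℕ, if l < k' then Γ k' else 0) = ∑' n : ℕ, Γ (n + (l + 1)) := by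
  have hs : Summable (fun k' => if l < k' then Γ k' else 0) := by
    apply Summable.of_nonneg_of_le (fun i => ?_) (fun i => ?_) hsum
    · split_ifs with h
      · exact hΓ i
      · exact le_rfl
    · split_ifs with h
      · exact le_rfl
      · exact hΓ i
  rw [← Summable.sum_add_tsum_nat_add (l + 1) hs]
  have h1 : ∑ i ∈ Finset.range (l + 1), (if l < i then Γ i else 0) = 0 := by
    apply Finset.sum_eq_zero
    intro i hi
    simp only [Finset.mem_range] at hi
    rw [if_neg (by omega)]
  rw [h1, zero_add]
  apply tsum_congr
  intro n
  rw [if_pos (by omega)]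

/-- The coupling rates satisfy the recursion relations. -/
theorem stmt9 (Γ Γ' : ℕ → ℝ) (hΓ : ∀ k, 0 ≤ Γ k) (hΓ' : ∀ l, 0 ≤ Γ' l)
    (hsum : Summable Γ) (hsum' : Summable Γ')
    (Sa Sb : ℕ → ℝ)
    (hSa : ∀ k, Sa k = ∑' k' : ℕ, if k < k' then Γ k' else 0)
    (hSb : ∀ l, Sb l = ∑' l' : ℕ, if l < l' then Γ' l' else 0)
    (G : ℕ → ℕ → ℝ)
    (hG : ∀ k l, 1 ≤ k → 1 ≤ l → G k l =
      min (Γ k - min (Γ k) (Sb l - min (Sa k) (Sb l)))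
          (Γ' l - min (Γ' l) (Sa k - min (Sa k) (Sb l))))
    (hGk0 : ∀ k, 1 ≤ k → G k 0 = Γ k - min (Γ k) (Sb 0 - min (Sa k) (Sb 0)))
    (hG0l : ∀ l, 1 ≤ l → G 0 l = Γ' l - min (Γ' l) (Sa 0 - min (Sa 0) (Sb l)))
    (hG00 : G 0 0 = 0) :
    (∀ k l, 1 ≤ k → 1 ≤ l → G k l =
        min (Γ k - ∑' l' : ℕ, if l < l' then G k l' else 0)
            (Γ' l - ∑' k' : ℕ, if k < k' then G k' l else 0)) ∧
    (∀ l, 1 ≤ l → G 0 l = Γ' l - ∑' k' : ℕ, if 0 < k' then G k' l else 0) ∧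
    (∀ k, 1 ≤ k → G k 0 = Γ k - ∑' l' : ℕ, if 0 < l' then G k l' else 0) ∧
    G 0 0 = 0 := by
  -- tail representations
  have hSa' : ∀ k, Sa k = ∑' n : ℕ, Γ (n + (k + 1)) := fun k => by
    rw [hSa k, tail_repr Γ hΓ hsum]
  have hSb' : ∀ l, Sb l = ∑' n : ℕ, Γ' (n + (l + 1)) := fun l => by
    rw [hSb l, tail_repr Γ' hΓ' hsum']
  -- recursions
  have hSarec : ∀ k, Sa k = Γ (k + 1) + Sa (k + 1) := by
    intro k
    rw [hSa' k, hSa' (k + 1),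
      Summable.tsum_eq_zero_add ((summable_nat_add_iff (k + 1)).2 hsum)]
    simp only [Nat.zero_add]
    congr 1
    apply tsum_congr
    intro n; congr 1; omega
  have hSbrec : ∀ l, Sb l = Γ' (l + 1) + Sb (l + 1) := by
    intro l
    rw [hSb' l, hSb' (l + 1),
      Summable.tsum_eq_zero_add ((summable_nat_add_iff (l + 1)).2 hsum')]
    simp only [Nat.zero_add]
    congr 1
    apply tsum_congr
    intro n; congr 1; omega
  -- nonnegativity
  have hSann : ∀ k, 0 ≤ Sa k := fun k => by
    rw [hSa' k]; exact tsum_nonneg fun n => hΓ _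
  have hSbnn : ∀ l, 0 ≤ Sb l := fun l => by
    rw [hSb' l]; exact tsum_nonneg fun n => hΓ' _
  -- limits
  have hSalim : Tendsto Sa atTop (nhds 0) := by
    have := tendsto_sum_nat_add Γ
    have h2 := (Filter.tendsto_add_atTop_iff_nat 1).2 this
    exact h2.congr fun k => (hSa' k).symm
  have hSblim : Tendsto Sb atTop (nhds 0) := by
    have := tendsto_sum_nat_add Γ'
    have h2 := (Filter.tendsto_add_atTop_iff_nat 1).2 this
    exact h2.congr fun l => (hSb' l).symm
  -- row sums: for k ≥ 1, ∑_{l'>l} G k l' = min (Γ k) (max (Sb l - Sa k) 0)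
  have hrow : ∀ k, 1 ≤ k → ∀ l, HasSum (fun i => if l < i then G k i else 0)
      (min (Γ k) (max (Sb l - Sa k) 0)) := by
    intro k hk l
    set f : ℕ → ℝ := fun m => min (Γ k) (max (Sb m - Sa k) 0) with hf
    have hstep : ∀ m, G k (m + 1) = f m - f (m + 1) := by
      intro m
      rw [hG k (m + 1) hk (by omega), msub (Sa k) (Sb (m + 1))]
      have h255 : Sa k - min (Sa k) (Sb (m + 1)) = max (Sa k - Sb (m + 1)) 0 := by
        rw [min_comm]; exact msub (Sb (m + 1)) (Sa k)
      rw [h255, keyid (Γ k) (Γ' (m + 1)) (Sa k) (Sb (m + 1)) (hΓ k) (hΓ' (m + 1))]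
      simp only [hf]
      rw [hSbrec m]
      ring_nf
    have hmono : ∀ m, f (m + 1) ≤ f m := by
      intro m
      apply min_le_min le_rfl
      apply max_le_max _ le_rfl
      have := hSbrec m
      have := hΓ' (m + 1)
      linarith
    have hlim : Tendsto f atTop (nhds 0) := by
      have h1 : Tendsto (fun m => min (Γ k) (max (Sb m - Sa k) 0)) atTop
          (nhds (min (Γ k) (max (0 - Sa k) 0))) :=
        tendsto_const_nhds.min ((hSblim.sub tendsto_const_nhds).max tendsto_const_nhds)
      have h2 : min (Γ k) (max (0 - Sa k) 0) = 0 := by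
        rw [zero_sub, max_eq_right (by linarith [hSann k]), min_eq_right (hΓ k)]
      rw [h2] at h1
      exact h1
    exact tele (G k) f l hstep hmono hlim
  -- column sums: for l ≥ 1, ∑_{k'>k} G k' l = min (Γ' l) (max (Sa k - Sb l) 0)
  have hcol : ∀ l, 1 ≤ l → ∀ k, HasSum (fun i => if k < i then G i l else 0)
      (min (Γ' l) (max (Sa k - Sb l) 0)) := by
    intro l hl k
    set g : ℕ → ℝ := fun m => min (Γ' l) (max (Sa m - Sb l) 0) with hg
    have hstep : ∀ m, G (m + 1) l = g m - g (m + 1) := by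
      intro m
      rw [hG (m + 1) l (by omega) hl, msub (Sa (m + 1)) (Sb l)]
      have h255 : Sa (m + 1) - min (Sa (m + 1)) (Sb l) = max (Sa (m + 1) - Sb l) 0 := by
        rw [min_comm]; exact msub (Sb l) (Sa (m + 1))
      rw [h255, min_comm,
        keyid (Γ' l) (Γ (m + 1)) (Sb l) (Sa (m + 1)) (hΓ' l) (hΓ (m + 1))]
      simp only [hg]
      rw [hSarec m]
      ring_nf
    have hmono : ∀ m, g (m + 1) ≤ g m := by
      intro m
      apply min_le_min le_rfl
      apply max_le_max _ le_rfl
      have := hSarec m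
      have := hΓ (m + 1)
      linarith
    have hlim : Tendsto g atTop (nhds 0) := by
      have h1 : Tendsto (fun m => min (Γ' l) (max (Sa m - Sb l) 0)) atTop
          (nhds (min (Γ' l) (max (0 - Sb l) 0))) :=
        tendsto_const_nhds.min ((hSalim.sub tendsto_const_nhds).max tendsto_const_nhds)
      have h2 : min (Γ' l) (max (0 - Sb l) 0) = 0 := by
        rw [zero_sub, max_eq_right (by linarith [hSbnn l]), min_eq_right (hΓ' l)]
      rw [h2] at h1
      exact h1
    exact tele (fun i => G i l) g k hstep hmono hlim
  refine ⟨?_, ?_, ?_, hG00⟩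
  · intro k l hk hl
    have h1 : Sa k - min (Sa k) (Sb l) = max (Sa k - Sb l) 0 := by
      rw [min_comm]; exact msub (Sb l) (Sa k)
    rw [(hrow k hk l).tsum_eq, (hcol l hl k).tsum_eq, hG k l hk hl,
      msub (Sa k) (Sb l), h1]
  · intro l hl
    have h1 : Sa 0 - min (Sa 0) (Sb l) = max (Sa 0 - Sb l) 0 := by
      rw [min_comm]; exact msub (Sb l) (Sa 0)
    rw [(hcol l hl 0).tsum_eq, hG0l l hl, h1]
  · intro k hk
    rw [(hrow k hk 0).tsum_eq, hGk0 k hk, msub (Sa k) (Sb 0)]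
end

section
/- With Γ, Γ', Σ, Σ' as above, define the staircase path P = {(k_i,l_i)}_{i≥0} by (k_0,l_0)=(0,0) and, for i>0, (k_i,l_i) = (k_{i−1}+1, l_{i−1}) if Σ_{k_{i−1}} ≥ Σ'_{l_{i−1}} and (k_i,l_i) = (k_{i−1}, l_{i−1}+1) otherwise. Then any family (G(k,l))_{k,l≥0} of nonnegative reals solving the recursion G(k,l) = (Γ_k − Σ_{l'>l} G(k,l')) ∧ (Γ'_l − Σ_{k'>k} G(k',l)) (k,l ≥ 1), G(0,l) = Γ'_l − Σ_{k'>0} G(k',l), G(k,0) = Γ_k − Σ_{l'>0} G(k,l'), G(0,0)=0, satisfies: G(k,l) = 0 for (k,l) ∉ P, and G(k_i,l_i) = Σ_{k_{i−1}} ∨ Σ'_{l_{i−1}} − Σ_{k_i} ∨ Σ'_{l_i} for all i > 0. -/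
lemma aux_ite_summable (f : ℕ → ℝ) (h0 : ∀ n, 0 ≤ f n) (hf : Summable f) (k : ℕ) :
    Summable (fun n => if k < n then f n else 0) := by
  apply Summable.of_nonneg_of_le (fun n => ?_) (fun n => ?_) hf <;> split <;> simp [h0]

lemma aux_tail_eq (f : ℕ → ℝ) (h0 : ∀ n, 0 ≤ f n) (hf : Summable f) (k : ℕ) :
    ∑' n, (if k < n then f n else 0) = (∑' n, f n) - ∑ i ∈ Finset.range (k+1), f i := by
  have h1 : ∑' n, (if n < k + 1 then f n else 0) = ∑ i ∈ Finset.range (k+1), f i := by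
    rw [tsum_eq_sum (s := Finset.range (k+1))]
    · exact Finset.sum_congr rfl (fun i hi => by simp [Finset.mem_range.mp hi])
    · intro b hb; simp only [Finset.mem_range] at hb; simp [hb]
  have h2 : ∀ n, (if k < n then f n else 0) = f n - (if n < k + 1 then f n else 0) := by
    intro n; rcases lt_or_ge k n with h | h
    · rw [if_pos h, if_neg (by omega)]; ring
    · rw [if_neg (by omega), if_pos (by omega)]; ring
  calc ∑' n, (if k < n then f n else 0) = ∑' n, (f n - (if n < k + 1 then f n else 0)) :=
        tsum_congr h2
    _ = (∑' n, f n) - ∑' n, (if n < k + 1 then f n else 0) := by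
        refine Summable.tsum_sub hf ?_
        exact summable_of_ne_finset_zero (s := Finset.range (k+1))
          (fun b hb => by simp only [Finset.mem_range] at hb; simp [hb])
    _ = _ := by rw [h1]

lemma aux_tail_nonneg (f : ℕ → ℝ) (h0 : ∀ n, 0 ≤ f n) (k : ℕ) :
    0 ≤ ∑' n, (if k < n then f n else 0) :=
  tsum_nonneg (fun n => by split <;> simp [h0])

lemma aux_tail_step (f : ℕ → ℝ) (h0 : ∀ n, 0 ≤ f n) (hf : Summable f) (k : ℕ) :
    ∑' n, (if k < n then f n else 0) = f (k+1) + ∑' n, (if k + 1 < n then f n else 0) := by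
  rw [aux_tail_eq f h0 hf k, aux_tail_eq f h0 hf (k+1), Finset.sum_range_succ (n := k+1)]
  ring

lemma aux_summable_shift (f g : ℕ → ℝ) (h0 : ∀ n, 0 ≤ f n) (hg : Summable g)
    (h : ∀ n, 1 ≤ n → f n ≤ g n) : Summable f := by
  rw [← summable_nat_add_iff 1]
  exact Summable.of_nonneg_of_le (fun n => h0 _) (fun n => h _ (by omega))
    ((summable_nat_add_iff 1).mpr hg)

lemma aux_tsum_pos (f : ℕ → ℝ) (h0 : ∀ n, 0 ≤ f n) (h : 0 < ∑' n, f n) : ∃ n, 0 < f n := by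
  by_contra hc
  push_neg at hc
  have h1 : ∀ n, f n = 0 := fun n => le_antisymm (hc n) (h0 n)
  simp [h1] at h

theorem aux_main (Γ Γ' : ℕ → ℝ) (hΓ : ∀ k, 0 ≤ Γ k) (hΓ' : ∀ l, 0 ≤ Γ' l)
    (hsum : Summable Γ) (hsum' : Summable Γ')
    (Sa Sb : ℕ → ℝ)
    (hSa : ∀ k, Sa k = ∑' k' : ℕ, if k < k' then Γ k' else 0)
    (hSb : ∀ l, Sb l = ∑' l' : ℕ, if l < l' then Γ' l' else 0)
    (G : ℕ → ℕ → ℝ) (hGpos : ∀ k l, 0 ≤ G k l)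
    (hG : ∀ k l, 1 ≤ k → 1 ≤ l → G k l =
        min (Γ k - ∑' l' : ℕ, if l < l' then G k l' else 0)
            (Γ' l - ∑' k' : ℕ, if k < k' then G k' l else 0))
    (hG0l : ∀ l, 1 ≤ l → G 0 l = Γ' l - ∑' k' : ℕ, if 0 < k' then G k' l else 0)
    (hGk0 : ∀ k, 1 ≤ k → G k 0 = Γ k - ∑' l' : ℕ, if 0 < l' then G k l' else 0) :
    (∀ k, G (k+1) 0 = max (Sa k) (Sb 0) - max (Sa (k+1)) (Sb 0)) ∧
    (∀ l, G 0 (l+1) = max (Sa 0) (Sb l) - max (Sa 0) (Sb (l+1))) ∧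
    (∀ k l, G (k+1) (l+1) = max (Sa k) (Sb (l+1)) + max (Sa (k+1)) (Sb l)
        - max (Sa k) (Sb l) - max (Sa (k+1)) (Sb (l+1))) := by
  -- row and column bounds
  have hrowb : ∀ k l, 1 ≤ l → G k l ≤ Γ' l := by
    intro k l hl
    rcases Nat.eq_zero_or_pos k with hk | hk
    · subst hk
      rw [hG0l l hl]
      have := aux_tail_nonneg (fun k' => G k' l) (fun k' => hGpos k' l) 0
      linarith
    · rw [hG k l hk hl]
      have h1 := min_le_right (Γ k - ∑' l' : ℕ, if l < l' then G k l' else 0)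
        (Γ' l - ∑' k' : ℕ, if k < k' then G k' l else 0)
      have := aux_tail_nonneg (fun k' => G k' l) (fun k' => hGpos k' l) k
      linarith
  have hcolb : ∀ k l, 1 ≤ k → G k l ≤ Γ k := by
    intro k l hk
    rcases Nat.eq_zero_or_pos l with hl | hl
    · subst hl
      rw [hGk0 k hk]
      have := aux_tail_nonneg (fun l' => G k l') (fun l' => hGpos k l') 0
      linarith
    · rw [hG k l hk hl]
      have h1 := min_le_left (Γ k - ∑' l' : ℕ, if l < l' then G k l' else 0)
        (Γ' l - ∑' k' : ℕ, if k < k' then G k' l else 0)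
      have := aux_tail_nonneg (fun l' => G k l') (fun l' => hGpos k l') l
      linarith
  have hrow : ∀ k, Summable (fun l => G k l) :=
    fun k => aux_summable_shift _ Γ' (hGpos k) hsum' (fun l hl => hrowb k l hl)
  have hcol : ∀ l, Summable (fun k => G k l) :=
    fun l => aux_summable_shift _ Γ (fun k => hGpos k l) hsum (fun k hk => hcolb k l hk)
  have hrowsum : ∀ k, 1 ≤ k → ∑' l, G k l = Γ k := by
    intro k hk
    have h := hGk0 k hk
    rw [aux_tail_eq (fun l => G k l) (hGpos k) (hrow k) 0] at h
    simp [Finset.sum_range_one] at h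
    linarith
  have hcolsum : ∀ l, 1 ≤ l → ∑' k, G k l = Γ' l := by
    intro l hl
    have h := hG0l l hl
    rw [aux_tail_eq (fun k => G k l) (fun k => hGpos k l) (hcol l) 0] at h
    simp [Finset.sum_range_one] at h
    linarith
  have hrtail : ∀ k l, 1 ≤ k → (∑' l' : ℕ, if l < l' then G k l' else 0)
      = Γ k - ∑ i ∈ Finset.range (l+1), G k i := by
    intro k l hk
    rw [aux_tail_eq (fun l => G k l) (hGpos k) (hrow k) l, hrowsum k hk]
  have hctail : ∀ k l, 1 ≤ l → (∑' k' : ℕ, if k < k' then G k' l else 0)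
      = Γ' l - ∑ i ∈ Finset.range (k+1), G i l := by
    intro k l hl
    rw [aux_tail_eq (fun k => G k l) (fun k => hGpos k l) (hcol l) k, hcolsum l hl]
  have hmin : ∀ k l, 1 ≤ k → 1 ≤ l → G k l =
      min (∑ i ∈ Finset.range (l+1), G k i) (∑ i ∈ Finset.range (k+1), G i l) := by
    intro k l hk hl
    rw [hG k l hk hl, hrtail k l hk, hctail k l hl]
    congr 1 <;> ring
  have nocross : ∀ k l a b c d, k < a → b ≤ l → c ≤ k → l < d →
      0 < G a b → 0 < G c d → False := by
    intro k l a b c d hka hbl hck hld hab hcd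
    have h := hmin a d (by omega) (by omega)
    rcases min_choice (∑ i ∈ Finset.range (d+1), G a i) (∑ i ∈ Finset.range (a+1), G i d)
      with hmc | hmc <;> rw [hmc] at h
    · rw [Finset.sum_range_succ] at h
      have h2 : ∑ i ∈ Finset.range d, G a i = 0 := by linarith
      have h3 : G a b ≤ ∑ i ∈ Finset.range d, G a i :=
        Finset.single_le_sum (fun i _ => hGpos a i) (Finset.mem_range.mpr (by omega))
      linarith
    · rw [Finset.sum_range_succ] at h
      have h2 : ∑ i ∈ Finset.range a, G i d = 0 := by linarith
      have h3 : G c d ≤ ∑ i ∈ Finset.range a, G i d :=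
        Finset.single_le_sum (fun i _ => hGpos i d) (Finset.mem_range.mpr (by omega))
      linarith
  -- bounds for row tails
  have hrtail_nonneg : ∀ a l, 0 ≤ ∑' l' : ℕ, (if l < l' then G a l' else 0) :=
    fun a l => aux_tail_nonneg (fun l' => G a l') (hGpos a) l
  have hctail_nonneg : ∀ k b, 0 ≤ ∑' k' : ℕ, (if k < k' then G k' b else 0) :=
    fun k b => aux_tail_nonneg (fun k' => G k' b) (fun k' => hGpos k' b) k
  have hrtail_le : ∀ a l, 1 ≤ a → (∑' l' : ℕ, if l < l' then G a l' else 0) ≤ Γ a := by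
    intro a l ha
    rw [hrtail a l ha]
    have : 0 ≤ ∑ i ∈ Finset.range (l+1), G a i :=
      Finset.sum_nonneg (fun i _ => hGpos a i)
    linarith
  -- the double tail F
  have hFs : ∀ k l, Summable (fun k' =>
      if k < k' then (∑' l' : ℕ, if l < l' then G k' l' else 0) else 0) := by
    intro k l
    apply Summable.of_nonneg_of_le (fun a => ?_) (fun a => ?_) hsum
    · split
      · exact hrtail_nonneg a l
      · exact le_refl 0
    · split
      · exact hrtail_le a l (by omega)
      · exact hΓ a
  have hA : ∀ k l, Sa k - (∑' k' : ℕ, if k < k' then (∑' l' : ℕ, if l < l' then G k' l' else 0) else 0)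
      = ∑ i ∈ Finset.range (l+1), (∑' k' : ℕ, if k < k' then G k' i else 0) := by
    intro k l
    have e1 : ∀ k' : ℕ, (if k < k' then (∑' l' : ℕ, if l < l' then G k' l' else 0) else 0)
        = (if k < k' then Γ k' else 0) - (if k < k' then ∑ i ∈ Finset.range (l+1), G k' i else 0) := by
      intro k'
      rcases lt_or_ge k k' with h | h
      · rw [if_pos h, if_pos h, if_pos h, hrtail k' l (by omega)]
      · rw [if_neg (by omega), if_neg (by omega), if_neg (by omega)]; ring
    have hs2 : Summable (fun k' => if k < k' then ∑ i ∈ Finset.range (l+1), G k' i else 0) := by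
      apply Summable.of_nonneg_of_le (fun a => ?_) (fun a => ?_) hsum
      · split
        · exact Finset.sum_nonneg (fun i _ => hGpos _ i)
        · exact le_refl 0
      · split
        · rename_i h
          have := hrtail a l (by omega)
          have h2 := hrtail_nonneg a l
          rw [this] at h2
          linarith
        · exact hΓ a
    have e2 : (∑' k' : ℕ, if k < k' then (∑' l' : ℕ, if l < l' then G k' l' else 0) else 0)
        = Sa k - ∑' k' : ℕ, (if k < k' then ∑ i ∈ Finset.range (l+1), G k' i else 0) := by
      rw [tsum_congr e1, Summable.tsum_sub (aux_ite_summable Γ hΓ hsum k) hs2, hSa k]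
    rw [e2]
    have e3 : ∑' k' : ℕ, (if k < k' then ∑ i ∈ Finset.range (l+1), G k' i else 0)
        = ∑ i ∈ Finset.range (l+1), (∑' k' : ℕ, if k < k' then G k' i else 0) := by
      rw [← Summable.tsum_finsetSum (fun i _ => aux_ite_summable (fun k' => G k' i) (fun k' => hGpos k' i) (hcol i) k)]
      apply tsum_congr
      intro k'
      rcases lt_or_ge k k' with h | h
      · simp [h]
      · simp [Nat.not_lt.mpr h]
    rw [e3]
    ring
  -- Fubini: F is also the tail of column tails
  have hFsymm : ∀ k l, (∑' k' : ℕ, if k < k' then (∑' l' : ℕ, if l < l' then G k' l' else 0) else 0)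
      = ∑' l' : ℕ, if l < l' then (∑' k' : ℕ, if k < k' then G k' l' else 0) else 0 := by
    intro k l
    set P : ℕ → ℕ → ℝ := fun a b => if k < a ∧ l < b then G a b else 0 with hP
    have hP0 : ∀ a b, 0 ≤ P a b := by
      intro a b; simp only [hP]; split
      · exact hGpos a b
      · exact le_refl 0
    have hP1 : ∀ a, Summable (P a) := by
      intro a
      rcases lt_or_ge k a with h | h
      · have : P a = fun b => if l < b then G a b else 0 := by
          funext b; simp only [hP]
          rcases lt_or_ge l b with h2 | h2
          · rw [if_pos ⟨h, h2⟩, if_pos h2]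
          · rw [if_neg (by omega), if_neg (by omega)]
        rw [this]
        exact aux_ite_summable (fun b => G a b) (hGpos a) (hrow a) l
      · have : P a = fun _ => (0:ℝ) := by
          funext b; simp only [hP]; rw [if_neg (by omega)]
        rw [this]; exact summable_zero
    have hP1' : ∀ b, Summable (fun a => P a b) := by
      intro b
      rcases lt_or_ge l b with h | h
      · have : (fun a => P a b) = fun a => if k < a then G a b else 0 := by
          funext a; simp only [hP]
          rcases lt_or_ge k a with h2 | h2
          · rw [if_pos ⟨h2, h⟩, if_pos h2]
          · rw [if_neg (by omega), if_neg (by omega)]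
        rw [this]
        exact aux_ite_summable (fun a => G a b) (fun a => hGpos a b) (hcol b) k
      · have : (fun a => P a b) = fun _ => (0:ℝ) := by
          funext a; simp only [hP]; rw [if_neg (by omega)]
        rw [this]; exact summable_zero
    have hP2 : ∀ a, ∑' b, P a b = if k < a then (∑' b : ℕ, if l < b then G a b else 0) else 0 := by
      intro a
      rcases lt_or_ge k a with h | h
      · rw [if_pos h]
        apply tsum_congr; intro b; simp only [hP]
        rcases lt_or_ge l b with h2 | h2
        · rw [if_pos ⟨h, h2⟩, if_pos h2]
        · rw [if_neg (by omega), if_neg (by omega)]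
      · rw [if_neg (by omega)]
        have : ∀ b, P a b = 0 := by
          intro b; simp only [hP]; rw [if_neg (by omega)]
        simp [this]
    have hP2' : ∀ b, ∑' a, P a b = if l < b then (∑' a : ℕ, if k < a then G a b else 0) else 0 := by
      intro b
      rcases lt_or_ge l b with h | h
      · rw [if_pos h]
        apply tsum_congr; intro a; simp only [hP]
        rcases lt_or_ge k a with h2 | h2
        · rw [if_pos ⟨h2, h⟩, if_pos h2]
        · rw [if_neg (by omega), if_neg (by omega)]
      · rw [if_neg (by omega)]
        have : ∀ a, P a b = 0 := by
          intro a; simp only [hP]; rw [if_neg (by omega)]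
        simp [this]
    have hunc : Summable (Function.uncurry P) := by
      refine (summable_prod_of_nonneg (f := Function.uncurry P) (fun p => hP0 p.1 p.2)).mpr
        ⟨fun a => hP1 a, ?_⟩
      have e : (fun x : ℕ => ∑' y : ℕ, Function.uncurry P (x, y))
          = fun a => if k < a then (∑' b : ℕ, if l < b then G a b else 0) else 0 := funext hP2
      exact e ▸ hFs k l
    calc (∑' k' : ℕ, if k < k' then (∑' l' : ℕ, if l < l' then G k' l' else 0) else 0)
        = ∑' a, ∑' b, P a b := by rw [tsum_congr hP2]
      _ = ∑' b, ∑' a, P a b := (Summable.tsum_comm' hunc hP1 hP1').symm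
      _ = _ := by rw [tsum_congr hP2']
  have hB : ∀ k l, Sb l - (∑' k' : ℕ, if k < k' then (∑' l' : ℕ, if l < l' then G k' l' else 0) else 0)
      = ∑ j ∈ Finset.range (k+1), (∑' l' : ℕ, if l < l' then G j l' else 0) := by
    intro k l
    rw [hFsymm k l]
    have e1 : ∀ l' : ℕ, (if l < l' then (∑' k' : ℕ, if k < k' then G k' l' else 0) else 0)
        = (if l < l' then Γ' l' else 0) - (if l < l' then ∑ j ∈ Finset.range (k+1), G j l' else 0) := by
      intro l'
      rcases lt_or_ge l l' with h | h
      · rw [if_pos h, if_pos h, if_pos h, hctail k l' (by omega)]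
      · rw [if_neg (by omega), if_neg (by omega), if_neg (by omega)]; ring
    have hs2 : Summable (fun l' => if l < l' then ∑ j ∈ Finset.range (k+1), G j l' else 0) := by
      apply Summable.of_nonneg_of_le (fun b => ?_) (fun b => ?_) hsum'
      · split
        · exact Finset.sum_nonneg (fun j _ => hGpos j _)
        · exact le_refl 0
      · split
        · rename_i h
          have := hctail k b (by omega)
          have h2 := hctail_nonneg k b
          rw [this] at h2
          linarith
        · exact hΓ' b
    have e2 : (∑' l' : ℕ, if l < l' then (∑' k' : ℕ, if k < k' then G k' l' else 0) else 0)
        = Sb l - ∑' l' : ℕ, (if l < l' then ∑ j ∈ Finset.range (k+1), G j l' else 0) := by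
      rw [tsum_congr e1, Summable.tsum_sub (aux_ite_summable Γ' hΓ' hsum' l) hs2, hSb l]
    rw [e2]
    have e3 : ∑' l' : ℕ, (if l < l' then ∑ j ∈ Finset.range (k+1), G j l' else 0)
        = ∑ j ∈ Finset.range (k+1), (∑' l' : ℕ, if l < l' then G j l' else 0) := by
      rw [← Summable.tsum_finsetSum (fun j _ => aux_ite_summable (fun l' => G j l') (hGpos j) (hrow j) l)]
      apply tsum_congr
      intro l'
      rcases lt_or_ge l l' with h | h
      · simp [h]
      · simp [Nat.not_lt.mpr h]
    rw [e3]
    ring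
  -- F equals min of the tails
  have hFmin : ∀ k l, (∑' k' : ℕ, if k < k' then (∑' l' : ℕ, if l < l' then G k' l' else 0) else 0)
      = min (Sa k) (Sb l) := by
    intro k l
    set F := ∑' k' : ℕ, if k < k' then (∑' l' : ℕ, if l < l' then G k' l' else 0) else 0 with hF
    have hA0 : 0 ≤ Sa k - F := by
      rw [hA k l]
      exact Finset.sum_nonneg (fun i _ => hctail_nonneg k i)
    have hB0 : 0 ≤ Sb l - F := by
      rw [hB k l]
      exact Finset.sum_nonneg (fun j _ => hrtail_nonneg j l)
    refine le_antisymm (le_min (by linarith) (by linarith)) ?_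
    by_contra hcon
    push_neg at hcon
    have hApos : 0 < Sa k - F := by
      have := min_le_left (Sa k) (Sb l); linarith
    have hBpos : 0 < Sb l - F := by
      have := min_le_right (Sa k) (Sb l); linarith
    rw [hA k l] at hApos
    rw [hB k l] at hBpos
    -- extract positive entries
    obtain ⟨i, hi, hipos⟩ : ∃ i ∈ Finset.range (l+1),
        0 < ∑' k' : ℕ, (if k < k' then G k' i else 0) := by
      by_contra hc
      push_neg at hc
      have : ∀ i ∈ Finset.range (l+1), (∑' k' : ℕ, (if k < k' then G k' i else 0)) = 0 :=
        fun i hi => le_antisymm (hc i hi) (hctail_nonneg k i)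
      rw [Finset.sum_congr rfl this] at hApos
      simp at hApos
    obtain ⟨j, hj, hjpos⟩ : ∃ j ∈ Finset.range (k+1),
        0 < ∑' l' : ℕ, (if l < l' then G j l' else 0) := by
      by_contra hc
      push_neg at hc
      have : ∀ j ∈ Finset.range (k+1), (∑' l' : ℕ, (if l < l' then G j l' else 0)) = 0 :=
        fun j hj => le_antisymm (hc j hj) (hrtail_nonneg j l)
      rw [Finset.sum_congr rfl this] at hBpos
      simp at hBpos
    obtain ⟨a, ha⟩ := aux_tsum_pos _ (fun k' => by split <;> simp [hGpos]) hipos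
    obtain ⟨d, hd⟩ := aux_tsum_pos _ (fun l' => by split <;> simp [hGpos]) hjpos
    have hka : k < a ∧ 0 < G a i := by
      by_cases h : k < a
      · rw [if_pos h] at ha; exact ⟨h, ha⟩
      · rw [if_neg h] at ha; exact absurd ha (by norm_num)
    have hld : l < d ∧ 0 < G j d := by
      by_cases h : l < d
      · rw [if_pos h] at hd; exact ⟨h, hd⟩
      · rw [if_neg h] at hd; exact absurd hd (by norm_num)
    exact nocross k l a i j d hka.1 (by have := Finset.mem_range.mp hi; omega)
      (by have := Finset.mem_range.mp hj; omega) hld.1 hka.2 hld.2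
  have hAmax : ∀ k l, ∑ i ∈ Finset.range (l+1), (∑' k' : ℕ, if k < k' then G k' i else 0)
      = max (Sa k) (Sb l) - Sb l := by
    intro k l
    have h := hA k l
    rw [hFmin k l] at h
    rw [← h]
    rcases le_total (Sa k) (Sb l) with h2 | h2
    · rw [min_eq_left h2, max_eq_right h2]; ring
    · rw [min_eq_right h2, max_eq_left h2]
  have hBmax : ∀ k l, ∑ j ∈ Finset.range (k+1), (∑' l' : ℕ, if l < l' then G j l' else 0)
      = max (Sa k) (Sb l) - Sa k := by
    intro k l
    have h := hB k l
    rw [hFmin k l] at h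
    rw [← h]
    rcases le_total (Sa k) (Sb l) with h2 | h2
    · rw [min_eq_left h2, max_eq_right h2]
    · rw [min_eq_right h2, max_eq_left h2]; ring
  have hcolT0 : ∀ k, (∑' k' : ℕ, if k < k' then G k' 0 else 0) = max (Sa k) (Sb 0) - Sb 0 := by
    intro k
    have := hAmax k 0
    simpa [Finset.sum_range_one] using this
  have hcolT : ∀ k l, (∑' k' : ℕ, if k < k' then G k' (l+1) else 0)
      = (max (Sa k) (Sb (l+1)) - Sb (l+1)) - (max (Sa k) (Sb l) - Sb l) := by
    intro k l
    have h1 := hAmax k (l+1)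
    have h2 := hAmax k l
    rw [Finset.sum_range_succ] at h1
    rw [h2] at h1
    linarith
  have hrowT0 : ∀ l, (∑' l' : ℕ, if l < l' then G 0 l' else 0) = max (Sa 0) (Sb l) - Sa 0 := by
    intro l
    have := hBmax 0 l
    simpa [Finset.sum_range_one] using this
  refine ⟨?_, ?_, ?_⟩
  · intro k
    have hstep := aux_tail_step (fun a => G a 0) (fun a => hGpos a 0) (hcol 0) k
    rw [hcolT0 k, hcolT0 (k+1)] at hstep
    linarith
  · intro l
    have hstep := aux_tail_step (fun b => G 0 b) (hGpos 0) (hrow 0) l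
    rw [hrowT0 l, hrowT0 (l+1)] at hstep
    linarith
  · intro k l
    have hstep := aux_tail_step (fun a => G a (l+1)) (fun a => hGpos a (l+1)) (hcol (l+1)) k
    rw [hcolT k l, hcolT (k+1) l] at hstep
    linarith


/-- Any nonnegative solution of the coupling recursion is supported on the
staircase path and is given there by differences of maxima of tails. -/
theorem stmt10 (Γ Γ' : ℕ → ℝ) (hΓ : ∀ k, 0 ≤ Γ k) (hΓ' : ∀ l, 0 ≤ Γ' l)
    (hsum : Summable Γ) (hsum' : Summable Γ')
    (Sa Sb : ℕ → ℝ)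
    (hSa : ∀ k, Sa k = ∑' k' : ℕ, if k < k' then Γ k' else 0)
    (hSb : ∀ l, Sb l = ∑' l' : ℕ, if l < l' then Γ' l' else 0)
    (G : ℕ → ℕ → ℝ) (hGpos : ∀ k l, 0 ≤ G k l)
    (hG : ∀ k l, 1 ≤ k → 1 ≤ l → G k l =
        min (Γ k - ∑' l' : ℕ, if l < l' then G k l' else 0)
            (Γ' l - ∑' k' : ℕ, if k < k' then G k' l else 0))
    (hG0l : ∀ l, 1 ≤ l → G 0 l = Γ' l - ∑' k' : ℕ, if 0 < k' then G k' l else 0)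
    (hGk0 : ∀ k, 1 ≤ k → G k 0 = Γ k - ∑' l' : ℕ, if 0 < l' then G k l' else 0)
    (hG00 : G 0 0 = 0)
    (kseq lseq : ℕ → ℕ) (hk0 : kseq 0 = 0) (hl0 : lseq 0 = 0)
    (hstep : ∀ i : ℕ,
      (Sb (lseq i) ≤ Sa (kseq i) → kseq (i + 1) = kseq i + 1 ∧ lseq (i + 1) = lseq i) ∧
      (¬ Sb (lseq i) ≤ Sa (kseq i) → kseq (i + 1) = kseq i ∧ lseq (i + 1) = lseq i + 1)) :
    (∀ k l : ℕ, (∀ i, ¬ (k = kseq i ∧ l = lseq i)) → G k l = 0) ∧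
    (∀ i : ℕ, 0 < i → G (kseq i) (lseq i)
      = max (Sa (kseq (i - 1))) (Sb (lseq (i - 1)))
        - max (Sa (kseq i)) (Sb (lseq i))) := by
  obtain ⟨hF1, hF2, hF3⟩ :=
    aux_main Γ Γ' hΓ hΓ' hsum hsum' Sa Sb hSa hSb G hGpos hG hG0l hGk0
  -- monotonicity of the tails
  have hSaStep : ∀ k, Sa (k+1) ≤ Sa k := by
    intro k
    have h := aux_tail_step Γ hΓ hsum k
    rw [← hSa k, ← hSa (k+1)] at h
    have := hΓ (k+1)
    linarith
  have hSbStep : ∀ l, Sb (l+1) ≤ Sb l := by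
    intro l
    have h := aux_tail_step Γ' hΓ' hsum' l
    rw [← hSb l, ← hSb (l+1)] at h
    have := hΓ' (l+1)
    linarith
  have hSam : Antitone Sa := antitone_nat_of_succ_le hSaStep
  have hSbm : Antitone Sb := antitone_nat_of_succ_le hSbStep
  -- path combinatorics
  have hkl : ∀ i, kseq i + lseq i = i := by
    intro i
    induction i with
    | zero => rw [hk0, hl0]
    | succ n ih =>
      rcases le_or_gt (Sb (lseq n)) (Sa (kseq n)) with h | h
      · obtain ⟨h1, h2⟩ := (hstep n).1 h; omega
      · obtain ⟨h1, h2⟩ := (hstep n).2 (not_le.mpr h); omega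
  have hIVTk : ∀ i v, v + 1 ≤ kseq i →
      ∃ j, j < i ∧ kseq j = v ∧ Sb (lseq j) ≤ Sa (kseq j) := by
    intro i
    induction i with
    | zero => intro v hv; rw [hk0] at hv; omega
    | succ n ih =>
      intro v hv
      by_cases hc : v + 1 ≤ kseq n
      · obtain ⟨j, hj, h2, h3⟩ := ih v hc
        exact ⟨j, by omega, h2, h3⟩
      · rcases le_or_gt (Sb (lseq n)) (Sa (kseq n)) with h | h
        · obtain ⟨h1, h2⟩ := (hstep n).1 h
          have : kseq n = v := by omega
          exact ⟨n, by omega, this, h⟩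
        · obtain ⟨h1, h2⟩ := (hstep n).2 (not_le.mpr h)
          omega
  have hIVTl : ∀ i v, v + 1 ≤ lseq i →
      ∃ j, j < i ∧ lseq j = v ∧ Sa (kseq j) < Sb (lseq j) := by
    intro i
    induction i with
    | zero => intro v hv; rw [hl0] at hv; omega
    | succ n ih =>
      intro v hv
      by_cases hc : v + 1 ≤ lseq n
      · obtain ⟨j, hj, h2, h3⟩ := ih v hc
        exact ⟨j, by omega, h2, h3⟩
      · rcases le_or_gt (Sb (lseq n)) (Sa (kseq n)) with h | h
        · obtain ⟨h1, h2⟩ := (hstep n).1 h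
          omega
        · obtain ⟨h1, h2⟩ := (hstep n).2 (not_le.mpr h)
          have : lseq n = v := by omega
          exact ⟨n, by omega, this, h⟩
  -- staircase invariant
  have hInv : ∀ i, (1 ≤ kseq i → Sb (lseq i) ≤ Sa (kseq i - 1)) ∧
      (1 ≤ lseq i → Sa (kseq i) ≤ Sb (lseq i - 1)) := by
    intro i
    induction i with
    | zero => rw [hk0, hl0]; exact ⟨by omega, by omega⟩
    | succ n ih =>
      rcases le_or_gt (Sb (lseq n)) (Sa (kseq n)) with h | h
      · obtain ⟨h1, h2⟩ := (hstep n).1 h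
        constructor
        · intro _
          rw [h1, h2, Nat.add_sub_cancel]
          exact h
        · intro hl1
          rw [h1, h2]
          rw [h2] at hl1
          exact le_trans (hSaStep (kseq n)) (ih.2 hl1)
      · obtain ⟨h1, h2⟩ := (hstep n).2 (not_le.mpr h)
        constructor
        · intro hk1
          rw [h1, h2]
          rw [h1] at hk1
          exact le_trans (hSbStep (lseq n)) (ih.1 hk1)
        · intro _
          rw [h1, h2, Nat.add_sub_cancel]
          exact le_of_lt h
  constructor
  · -- off the path G vanishes
    intro k l hoff
    have hKL := hkl (k + l)
    have hne : kseq (k + l) ≠ k := by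
      intro he
      exact hoff (k + l) ⟨he.symm, by omega⟩
    rcases Nat.lt_or_ge k (kseq (k + l)) with hgt | hge
    · -- the path is to the right: k < kseq (k+l); hence l ≥ 1
      obtain ⟨j, hj, hjk, hjcond⟩ := hIVTk (k + l) k (by omega)
      have hklj := hkl j
      have hlj : lseq j + 1 ≤ l := by omega
      have hbl : Sb (l - 1) ≤ Sa k := by
        calc Sb (l - 1) ≤ Sb (lseq j) := hSbm (by omega)
          _ ≤ Sa (kseq j) := hjcond
          _ = Sa k := by rw [hjk]
      have hl1 : 1 ≤ l := by omega
      obtain ⟨m, rfl⟩ : ∃ m, l = m + 1 := ⟨l - 1, by omega⟩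
      have hbm : Sb m ≤ Sa k := by simpa using hbl
      rcases Nat.eq_zero_or_pos k with hk0' | hk0'
      · subst hk0'
        rw [hF2 m, max_eq_left hbm, max_eq_left (le_trans (hSbStep m) hbm)]
        ring
      · obtain ⟨a, rfl⟩ : ∃ a, k = a + 1 := ⟨k - 1, by omega⟩
        have h1 : Sb m ≤ Sa a := le_trans hbm (hSaStep a)
        have h2 : Sb (m+1) ≤ Sa a := le_trans (hSbStep m) h1
        have h3 : Sb (m+1) ≤ Sa (a+1) := le_trans (hSbStep m) hbm
        rw [hF3 a m, max_eq_left h1, max_eq_left h2, max_eq_left hbm, max_eq_left h3]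
        ring
    · -- the path is below: kseq (k+l) < k; hence k ≥ 1
      have hklt : kseq (k + l) < k := by omega
      obtain ⟨j, hj, hjl, hjcond⟩ := hIVTl (k + l) l (by omega)
      have hklj := hkl j
      have hkj : kseq j + 1 ≤ k := by omega
      have hak : Sa (k - 1) < Sb l := by
        calc Sa (k - 1) ≤ Sa (kseq j) := hSam (by omega)
          _ < Sb (lseq j) := hjcond
          _ = Sb l := by rw [hjl]
      have hk1 : 1 ≤ k := by omega
      obtain ⟨a, rfl⟩ : ∃ a, k = a + 1 := ⟨k - 1, by omega⟩
      have ham : Sa a < Sb l := by simpa using hak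
      rcases Nat.eq_zero_or_pos l with hl0' | hl0'
      · subst hl0'
        rw [hF1 a, max_eq_right (le_of_lt ham),
          max_eq_right (le_trans (hSaStep a) (le_of_lt ham))]
        ring
      · obtain ⟨m, rfl⟩ : ∃ m, l = m + 1 := ⟨l - 1, by omega⟩
        have h1 : Sa a ≤ Sb (m+1) := le_of_lt ham
        have h2 : Sa a ≤ Sb m := le_trans h1 (hSbStep m)
        have h3 : Sa (a+1) ≤ Sb m := le_trans (hSaStep a) h2
        have h4 : Sa (a+1) ≤ Sb (m+1) := le_trans (hSaStep a) h1
        rw [hF3 a m, max_eq_right h1, max_eq_right h3, max_eq_right h2, max_eq_right h4]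
        ring
  · -- values on the path
    intro i hi
    obtain ⟨n, rfl⟩ : ∃ n, i = n + 1 := ⟨i - 1, by omega⟩
    simp only [Nat.add_sub_cancel]
    rcases le_or_gt (Sb (lseq n)) (Sa (kseq n)) with h | h
    · obtain ⟨h1, h2⟩ := (hstep n).1 h
      rw [h1, h2]
      rcases Nat.eq_zero_or_pos (lseq n) with hl' | hl'
      · rw [hl', hF1 (kseq n)]
      · obtain ⟨m, hm⟩ : ∃ m, lseq n = m + 1 := ⟨lseq n - 1, by omega⟩
        have hinv := (hInv n).2 (by omega)
        rw [hm] at hinv h ⊢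
        simp only [Nat.add_sub_cancel] at hinv
        have e1 : max (Sa (kseq n)) (Sb m) = Sb m := max_eq_right hinv
        have e2 : max (Sa (kseq n + 1)) (Sb m) = Sb m :=
          max_eq_right (le_trans (hSaStep (kseq n)) hinv)
        rw [hF3 (kseq n) m, e1, e2]
        ring
    · obtain ⟨h1, h2⟩ := (hstep n).2 (not_le.mpr h)
      rw [h1, h2]
      rcases Nat.eq_zero_or_pos (kseq n) with hk' | hk'
      · rw [hk', hF2 (lseq n)]
      · obtain ⟨a, ha⟩ : ∃ a, kseq n = a + 1 := ⟨kseq n - 1, by omega⟩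
        have hinv := (hInv n).1 (by omega)
        rw [ha] at hinv h ⊢
        simp only [Nat.add_sub_cancel] at hinv
        have e1 : max (Sa a) (Sb (lseq n)) = Sa a := max_eq_left hinv
        have e2 : max (Sa a) (Sb (lseq n + 1)) = Sa a :=
          max_eq_left (le_trans (hSbStep (lseq n)) hinv)
        rw [hF3 a (lseq n), e1, e2]
        ring
end

section
/- With Γ, Γ', Σ, Σ' and a solution G of the coupling recursion as above: if Σ_k ≥ Σ'_l then G(k',l') = 0 for all k' ≤ k and l' > l; and if Σ_k < Σ'_l then G(k',l') = 0 for all k' > k and l' ≤ l. -/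
open Finset

lemma summable_head (f : ℕ → ℝ) (n : ℕ) : Summable (fun m => if m ≤ n then f m else 0) :=
  summable_of_ne_finset_zero (s := Finset.range (n+1))
    (fun b hb => by simp [Finset.mem_range] at hb; rw [if_neg (by omega)])

lemma head_tsum (f : ℕ → ℝ) (n : ℕ) :
    ∑' m, (if m ≤ n then f m else 0) = ∑ m ∈ Finset.range (n+1), f m := by
  rw [tsum_eq_sum (s := Finset.range (n+1))
    (fun b hb => by simp [Finset.mem_range] at hb; rw [if_neg (by omega)])]
  exact Finset.sum_congr rfl (fun m hm => by simp [Finset.mem_range] at hm; rw [if_pos (by omega)])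

lemma split_head_tail (f : ℕ → ℝ) (n : ℕ) :
    (fun m => if n < m then f m else 0) = f - fun m => if m ≤ n then f m else 0 := by
  funext m
  rcases le_or_gt m n with h | h
  · simp [h, Nat.not_lt.mpr h]
  · simp [h, Nat.not_le.mpr h]

lemma summable_tail (f : ℕ → ℝ) (hf : Summable f) (n : ℕ) :
    Summable (fun m => if n < m then f m else 0) := by
  rw [split_head_tail]
  exact hf.sub (summable_head f n)

lemma tail_tsum (f : ℕ → ℝ) (hf : Summable f) (n : ℕ) :
    (∑ m ∈ Finset.range (n+1), f m) + (∑' m, if n < m then f m else 0) = ∑' m, f m := by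
  rw [split_head_tail]
  rw [show tsum (f - fun m => if m ≤ n then f m else 0)
      = ∑' m, (f m - if m ≤ n then f m else 0) from rfl,
    hf.tsum_sub (summable_head f n), head_tsum]
  ring

/-- Support restrictions for any nonnegative solution of the coupling recursion. -/
theorem stmt11 (Γ Γ' : ℕ → ℝ) (hΓ : ∀ k, 0 ≤ Γ k) (hΓ' : ∀ l, 0 ≤ Γ' l)
    (hsum : Summable Γ) (hsum' : Summable Γ')
    (Sa Sb : ℕ → ℝ)
    (hSa : ∀ k, Sa k = ∑' k' : ℕ, if k < k' then Γ k' else 0)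
    (hSb : ∀ l, Sb l = ∑' l' : ℕ, if l < l' then Γ' l' else 0)
    (G : ℕ → ℕ → ℝ) (hGpos : ∀ k l, 0 ≤ G k l)
    (hG : ∀ k l, 1 ≤ k → 1 ≤ l → G k l =
        min (Γ k - ∑' l' : ℕ, if l < l' then G k l' else 0)
            (Γ' l - ∑' k' : ℕ, if k < k' then G k' l else 0))
    (hG0l : ∀ l, 1 ≤ l → G 0 l = Γ' l - ∑' k' : ℕ, if 0 < k' then G k' l else 0)
    (hGk0 : ∀ k, 1 ≤ k → G k 0 = Γ k - ∑' l' : ℕ, if 0 < l' then G k l' else 0)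
    (hG00 : G 0 0 = 0) :
    ∀ k l : ℕ,
      (Sb l ≤ Sa k → ∀ k' l' : ℕ, k' ≤ k → l < l' → G k' l' = 0) ∧
      (Sa k < Sb l → ∀ k' l' : ℕ, k < k' → l' ≤ l → G k' l' = 0) := by
  -- nonnegativity of if-expressions
  have hite : ∀ (P : Prop) [Decidable P] (x : ℝ), 0 ≤ x → (0:ℝ) ≤ if P then x else 0 := by
    intro P _ x hx; split <;> simp [hx]
  -- Step 1: pointwise bounds
  have hGleΓ' : ∀ k l, 1 ≤ l → G k l ≤ Γ' l := by
    intro k l hl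
    rcases Nat.eq_zero_or_pos k with hk | hk
    · subst hk
      rw [hG0l l hl]
      have := tsum_nonneg (L := SummationFilter.unconditional ℕ) (fun k' : ℕ => hite (0 < k') (G k' l) (hGpos _ _))
      linarith
    · rw [hG k l hk hl]
      have := tsum_nonneg (L := SummationFilter.unconditional ℕ) (fun k' : ℕ => hite (k < k') (G k' l) (hGpos _ _))
      have h2 := min_le_right (Γ k - ∑' l' : ℕ, if l < l' then G k l' else 0)
        (Γ' l - ∑' k' : ℕ, if k < k' then G k' l else 0)
      linarith
  have hGleΓ : ∀ k l, 1 ≤ k → G k l ≤ Γ k := by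
    intro k l hk
    rcases Nat.eq_zero_or_pos l with hl | hl
    · subst hl
      rw [hGk0 k hk]
      have := tsum_nonneg (L := SummationFilter.unconditional ℕ) (fun l' : ℕ => hite (0 < l') (G k l') (hGpos _ _))
      linarith
    · rw [hG k l hk hl]
      have := tsum_nonneg (L := SummationFilter.unconditional ℕ) (fun l' : ℕ => hite (l < l') (G k l') (hGpos _ _))
      have h2 := min_le_left (Γ k - ∑' l' : ℕ, if l < l' then G k l' else 0)
        (Γ' l - ∑' k' : ℕ, if k < k' then G k' l else 0)
      linarith
  -- Step 2: summability of rows and columns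
  have hrow : ∀ k, Summable (fun l' => G k l') := by
    intro k
    refine (summable_nat_add_iff 1).mp ?_
    exact Summable.of_nonneg_of_le (fun n => hGpos _ _)
      (fun n => hGleΓ' k (n+1) (by omega)) ((summable_nat_add_iff 1).mpr hsum')
  have hcol : ∀ l, Summable (fun k' => G k' l) := by
    intro l
    refine (summable_nat_add_iff 1).mp ?_
    exact Summable.of_nonneg_of_le (fun n => hGpos _ _)
      (fun n => hGleΓ (n+1) l (by omega)) ((summable_nat_add_iff 1).mpr hsum)
  -- Step 3: row/column totals
  have hrowsum : ∀ k, 1 ≤ k → ∑' l', G k l' = Γ k := by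
    intro k hk
    have h := tail_tsum (fun l' => G k l') (hrow k) 0
    simp only [Nat.zero_add, Finset.sum_range_one] at h
    rw [hGk0 k hk] at h
    linarith
  have hcolsum : ∀ l, 1 ≤ l → ∑' k', G k' l = Γ' l := by
    intro l hl
    have h := tail_tsum (fun k' => G k' l) (hcol l) 0
    simp only [Nat.zero_add, Finset.sum_range_one] at h
    rw [hG0l l hl] at h
    linarith
  -- Step 4: consequences of each branch of the min
  have branchA : ∀ k l, 1 ≤ k → 1 ≤ l →
      G k l = Γ k - (∑' l', if l < l' then G k l' else 0) → ∀ m, m < l → G k m = 0 := by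
    intro k l hk hl hbr m hm
    have ht := tail_tsum (fun l' => G k l') (hrow k) l
    rw [hrowsum k hk] at ht
    have hss := Finset.sum_range_succ (fun l' => G k l') l
    have hsum0 : ∑ m' ∈ Finset.range l, G k m' = 0 := by
      linarith
    exact (Finset.sum_eq_zero_iff_of_nonneg (fun i _ => hGpos k i)).mp hsum0 m
      (Finset.mem_range.mpr hm)
  have branchB : ∀ k l, 1 ≤ k → 1 ≤ l →
      G k l = Γ' l - (∑' k', if k < k' then G k' l else 0) → ∀ m, m < k → G m l = 0 := by
    intro k l hk hl hbr m hm
    have ht := tail_tsum (fun k' => G k' l) (hcol l) k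
    rw [hcolsum l hl] at ht
    have hss := Finset.sum_range_succ (fun k' => G k' l) k
    have hsum0 : ∑ m' ∈ Finset.range k, G m' l = 0 := by
      linarith
    exact (Finset.sum_eq_zero_iff_of_nonneg (fun i _ => hGpos i l)).mp hsum0 m
      (Finset.mem_range.mpr hm)
  -- Step 5: opposite quadrants can't both carry mass
  have disjoint : ∀ (k l k₁ l₁ k₂ l₂ : ℕ), k₁ ≤ k → l < l₁ → k < k₂ → l₂ ≤ l →
      G k₁ l₁ ≠ 0 → G k₂ l₂ = 0 := by
    intro k l k₁ l₁ k₂ l₂ h1 h2 h3 h4 hne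
    by_contra hne2
    have hk₂ : 1 ≤ k₂ := by omega
    have hl₁ : 1 ≤ l₁ := by omega
    have hmin := hG k₂ l₁ hk₂ hl₁
    rcases le_total (Γ k₂ - ∑' l', if l₁ < l' then G k₂ l' else 0)
        (Γ' l₁ - ∑' k', if k₂ < k' then G k' l₁ else 0) with hab | hab
    · rw [min_eq_left hab] at hmin
      exact hne2 (branchA k₂ l₁ hk₂ hl₁ hmin l₂ (by omega))
    · rw [min_eq_right hab] at hmin
      exact hne (branchB k₂ l₁ hk₂ hl₁ hmin k₁ (by omega))
  intro k l
  -- quadrant sums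
  set A : ℝ := ∑' l', if l < l' then (∑ k' ∈ Finset.range (k+1), G k' l') else 0 with hA_def
  set E : ℝ := ∑' l', if l < l' then (∑' k', if k < k' then G k' l' else 0) else 0 with hE_def
  set B : ℝ := ∑' k', if k < k' then (∑ l' ∈ Finset.range (l+1), G k' l') else 0 with hB_def
  set D : ℝ := ∑' k', if k < k' then (∑' l', if l < l' then G k' l' else 0) else 0 with hD_def
  -- summability of the four quadrant-sum sequences
  have SA : Summable (fun l' => if l < l' then (∑ k' ∈ Finset.range (k+1), G k' l') else 0) := by
    refine Summable.of_nonneg_of_le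
      (fun l' => hite _ _ (Finset.sum_nonneg (fun i _ => hGpos i l')))
      (fun l' => ?_) (summable_tail Γ' hsum' l)
    by_cases h : l < l'
    · simp only [if_pos h]
      calc ∑ k' ∈ Finset.range (k+1), G k' l' ≤ ∑' k', G k' l' :=
            (hcol l').sum_le_tsum _ (fun i _ => hGpos i l')
        _ = Γ' l' := hcolsum l' (by omega)
    · simp [h]
  have SE : Summable (fun l' => if l < l' then (∑' k', if k < k' then G k' l' else 0) else 0) := by
    refine Summable.of_nonneg_of_le
      (fun l' => hite _ _ (tsum_nonneg (fun k' => hite _ _ (hGpos k' l'))))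
      (fun l' => ?_) (summable_tail Γ' hsum' l)
    by_cases h : l < l'
    · simp only [if_pos h]
      calc (∑' k', if k < k' then G k' l' else 0) ≤ ∑' k', G k' l' :=
            (summable_tail (fun k' => G k' l') (hcol l') k).tsum_le_tsum (fun k' => by by_cases hh : k < k' <;> simp [hh, hGpos])
              (hcol l')
        _ = Γ' l' := hcolsum l' (by omega)
    · simp [h]
  have SB : Summable (fun k' => if k < k' then (∑ l' ∈ Finset.range (l+1), G k' l') else 0) := by
    refine Summable.of_nonneg_of_le
      (fun k' => hite _ _ (Finset.sum_nonneg (fun i _ => hGpos k' i)))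
      (fun k' => ?_) (summable_tail Γ hsum k)
    by_cases h : k < k'
    · simp only [if_pos h]
      calc ∑ l' ∈ Finset.range (l+1), G k' l' ≤ ∑' l', G k' l' :=
            (hrow k').sum_le_tsum _ (fun i _ => hGpos k' i)
        _ = Γ k' := hrowsum k' (by omega)
    · simp [h]
  have SD : Summable (fun k' => if k < k' then (∑' l', if l < l' then G k' l' else 0) else 0) := by
    refine Summable.of_nonneg_of_le
      (fun k' => hite _ _ (tsum_nonneg (fun l' => hite _ _ (hGpos k' l'))))
      (fun k' => ?_) (summable_tail Γ hsum k)
    by_cases h : k < k'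
    · simp only [if_pos h]
      calc (∑' l', if l < l' then G k' l' else 0) ≤ ∑' l', G k' l' :=
            (summable_tail (fun l' => G k' l') (hrow k') l).tsum_le_tsum (fun l' => by by_cases hh : l < l' <;> simp [hh, hGpos])
              (hrow k')
        _ = Γ k' := hrowsum k' (by omega)
    · simp [h]
  -- mass balance identities
  have hSbAE : Sb l = A + E := by
    rw [hSb, hA_def, hE_def, ← SA.tsum_add SE]
    refine tsum_congr (fun l' => ?_)
    by_cases h : l < l'
    · simp only [if_pos h]
      have ht := tail_tsum (fun k' => G k' l') (hcol l') k
      rw [hcolsum l' (by omega)] at ht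
      linarith
    · simp [h]
  have hSaBD : Sa k = B + D := by
    rw [hSa, hB_def, hD_def, ← SB.tsum_add SD]
    refine tsum_congr (fun k' => ?_)
    by_cases h : k < k'
    · simp only [if_pos h]
      have ht := tail_tsum (fun l' => G k' l') (hrow k') l
      rw [hrowsum k' (by omega)] at ht
      linarith
    · simp [h]
  -- Fubini: D = E
  have hDE : D = E := by
    set F : ℕ → ℕ → ℝ := fun k' l' => if k < k' ∧ l < l' then G k' l' else 0 with hF_def
    have hFnn : ∀ k' l', 0 ≤ F k' l' := fun k' l' => hite _ _ (hGpos k' l')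
    have hFrow : ∀ k', Summable (F k') := by
      intro k'
      refine Summable.of_nonneg_of_le (hFnn k') (fun l' => ?_) (hrow k')
      by_cases h : k < k' ∧ l < l' <;> simp [hF_def, h, hGpos]
    have hFcol : ∀ l', Summable (fun k' => F k' l') := by
      intro l'
      refine Summable.of_nonneg_of_le (fun k' => hFnn k' l') (fun k' => ?_) (hcol l')
      by_cases h : k < k' ∧ l < l' <;> simp [hF_def, h, hGpos]
    have hFsum : Summable (Function.uncurry F) := by
      refine (summable_prod_of_nonneg (fun p => hFnn p.1 p.2)).mpr ⟨fun k' => hFrow k', ?_⟩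
      refine Summable.of_nonneg_of_le (fun k' => tsum_nonneg (fun l' => hFnn k' l'))
        (fun k' => ?_) (summable_tail Γ hsum k)
      by_cases h : k < k'
      · simp only [if_pos h]
        calc (∑' l', F k' l') ≤ ∑' l', G k' l' :=
              (hFrow k').tsum_le_tsum (fun l' => by
                  by_cases hh : k < k' ∧ l < l' <;> simp [hF_def, hh, hGpos])
                (hrow k')
          _ = Γ k' := hrowsum k' (by omega)
      · simp only [if_neg h]
        have h0 : ∀ l', F k' l' = 0 := fun l' => by
          simp only [hF_def]; rw [if_neg (by tauto)]
        rw [tsum_congr h0, tsum_zero]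
    have hDeq : D = ∑' (k' : ℕ) (l' : ℕ), F k' l' := by
      rw [hD_def]
      refine tsum_congr (fun k' => ?_)
      by_cases h : k < k'
      · simp only [if_pos h]
        refine tsum_congr (fun l' => ?_)
        by_cases hh : l < l' <;> simp [hF_def, h, hh]
      · simp only [if_neg h]
        rw [tsum_congr (fun l' => show F k' l' = 0 by simp [hF_def]; tauto), tsum_zero]
    have hEeq : E = ∑' (l' : ℕ) (k' : ℕ), F k' l' := by
      rw [hE_def]
      refine tsum_congr (fun l' => ?_)
      by_cases h : l < l'
      · simp only [if_pos h]
        refine tsum_congr (fun k' => ?_)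
        by_cases hh : k < k' <;> simp [hF_def, h, hh]
      · simp only [if_neg h]
        rw [tsum_congr (fun k' => show F k' l' = 0 by simp [hF_def]; tauto), tsum_zero]
    rw [hDeq, hEeq, hFsum.tsum_comm' hFrow hFcol]
  -- conclusion
  constructor
  · intro hcase k₁ l₁ hk₁ hl₁
    by_contra hne
    have hpos : 0 < G k₁ l₁ := lt_of_le_of_ne (hGpos _ _) (Ne.symm hne)
    have hB0 : B = 0 := by
      rw [hB_def]
      rw [tsum_congr (fun k' => show (if k < k' then (∑ l' ∈ Finset.range (l+1), G k' l') else 0) = 0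
        from ?_), tsum_zero]
      by_cases h : k < k'
      · simp only [if_pos h]
        exact Finset.sum_eq_zero (fun l₂ hl₂ =>
          disjoint k l k₁ l₁ k' l₂ hk₁ hl₁ h (by simp [Finset.mem_range] at hl₂; omega) hne)
      · simp [h]
    have hA : G k₁ l₁ ≤ A := by
      have h1 : G k₁ l₁ ≤ (if l < l₁ then (∑ k' ∈ Finset.range (k+1), G k' l₁) else 0) := by
        rw [if_pos hl₁]
        exact Finset.single_le_sum (fun i _ => hGpos i l₁) (Finset.mem_range.mpr (by omega))
      refine h1.trans ?_
      exact Summable.le_tsum SA l₁ (fun j _ => hite _ _ (Finset.sum_nonneg (fun i _ => hGpos i j)))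
    linarith
  · intro hcase k₂ l₂ hk₂ hl₂
    by_contra hne
    have hpos : 0 < G k₂ l₂ := lt_of_le_of_ne (hGpos _ _) (Ne.symm hne)
    have hA0 : A = 0 := by
      rw [hA_def]
      rw [tsum_congr (fun l' => show (if l < l' then (∑ k' ∈ Finset.range (k+1), G k' l') else 0) = 0
        from ?_), tsum_zero]
      by_cases h : l < l'
      · simp only [if_pos h]
        refine Finset.sum_eq_zero (fun k₁ hk₁ => ?_)
        by_contra hne1
        exact hne (disjoint k l k₁ l' k₂ l₂ (by simp [Finset.mem_range] at hk₁; omega) h hk₂ hl₂ hne1)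
      · simp [h]
    have hB : G k₂ l₂ ≤ B := by
      have h1 : G k₂ l₂ ≤ (if k < k₂ then (∑ l' ∈ Finset.range (l+1), G k₂ l') else 0) := by
        rw [if_pos hk₂]
        exact Finset.single_le_sum (fun i _ => hGpos k₂ i) (Finset.mem_range.mpr (by omega))
      refine h1.trans ?_
      exact Summable.le_tsum SB k₂ (fun j _ => hite _ _ (Finset.sum_nonneg (fun i _ => hGpos j i)))
    linarith
end

section
/- For the stick process with rates Γ^k_{α,β}(z) = p(z)·1_{k≤α}, the coupling rates defined by the general min-formulas equal: for k,l ≥ 1, G^{k;l}_{α,β;γ,δ}(z) = p(z)·1_{k≤α, l≤γ, α−γ=k−l}; G^{0;l}_{α,β;γ,δ}(z) = p(z)·1_{l≤γ−α} (when γ>α); G^{k;0}_{α,β;γ,δ}(z) = p(z)·1_{k≤α−γ} (when α>γ). -/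
private lemma aux_term (r : ℝ) (hr : 0 ≤ r) (P : Prop) [Decidable P] (n : ℕ) :
    (if P then r else 0) - min (if P then r else 0) (r * (n:ℝ)) =
      if P ∧ n = 0 then r else 0 := by
  by_cases hP : P
  · rw [if_pos hP]
    cases n with
    | zero =>
      rw [Nat.cast_zero, mul_zero, min_eq_right hr, sub_zero, if_pos ⟨hP, rfl⟩]
    | succ m =>
      have h1 : (1:ℝ) ≤ ((m+1 : ℕ) : ℝ) := by
        exact_mod_cast Nat.succ_le_succ (Nat.zero_le m)
      rw [min_eq_left (le_mul_of_one_le_right hr h1), sub_self,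
        if_neg (fun h => Nat.succ_ne_zero m h.2)]
  · rw [if_neg hP, if_neg (fun h => hP h.1), zero_sub,
      min_eq_left (by positivity), neg_zero]

private lemma aux_inner (r : ℝ) (hr : 0 ≤ r) (a b : ℕ) :
    r * (b:ℝ) - min (r * (a:ℝ)) (r * (b:ℝ)) = r * ((b - a : ℕ) : ℝ) := by
  rcases le_total a b with h' | h'
  · rw [min_eq_left (mul_le_mul_of_nonneg_left (by exact_mod_cast h') hr),
      Nat.cast_sub h', mul_sub]
  · rw [min_eq_right (mul_le_mul_of_nonneg_left (by exact_mod_cast h') hr),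
      Nat.sub_eq_zero_of_le h', sub_self, Nat.cast_zero, mul_zero]

/-- Explicit form of the coupling rates for the stick process. -/
theorem stmt15 (r : ℝ) (hr : 0 ≤ r) (α γ : ℕ)
    (Γ Γ' : ℕ → ℝ)
    (hΓ : ∀ k, Γ k = if 1 ≤ k ∧ k ≤ α then r else 0)
    (hΓ' : ∀ l, Γ' l = if 1 ≤ l ∧ l ≤ γ then r else 0)
    (Sa Sb : ℕ → ℝ)
    (hSa : ∀ k, Sa k = r * ((α - k : ℕ) : ℝ))
    (hSb : ∀ l, Sb l = r * ((γ - l : ℕ) : ℝ))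
    (G : ℕ → ℕ → ℝ)
    (hG : ∀ k l, 1 ≤ k → 1 ≤ l → G k l =
      min (Γ k - min (Γ k) (Sb l - min (Sa k) (Sb l)))
          (Γ' l - min (Γ' l) (Sa k - min (Sa k) (Sb l))))
    (hGk0 : ∀ k, 1 ≤ k → G k 0 = Γ k - min (Γ k) (Sb 0 - min (Sa k) (Sb 0)))
    (hG0l : ∀ l, 1 ≤ l → G 0 l = Γ' l - min (Γ' l) (Sa 0 - min (Sa 0) (Sb l)))
    (hG00 : G 0 0 = 0) :
    (∀ k l, 1 ≤ k → 1 ≤ l →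
      G k l = if k ≤ α ∧ l ≤ γ ∧ (α : ℤ) - γ = (k : ℤ) - l then r else 0) ∧
    (∀ l, 1 ≤ l → α < γ → G 0 l = if l ≤ γ - α then r else 0) ∧
    (∀ k, 1 ≤ k → γ < α → G k 0 = if k ≤ α - γ then r else 0) := by
  refine ⟨?_, ?_, ?_⟩
  · intro k l hk hl
    rw [hG k l hk hl, hΓ, hΓ', hSa, hSb, aux_inner r hr (α - k) (γ - l),
      min_comm (r * ((α - k : ℕ) : ℝ)) (r * ((γ - l : ℕ) : ℝ)),
      aux_inner r hr (γ - l) (α - k), aux_term r hr _ _, aux_term r hr _ _]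
    by_cases h1 : (1 ≤ k ∧ k ≤ α) ∧ γ - l - (α - k) = 0 <;>
      by_cases h2 : (1 ≤ l ∧ l ≤ γ) ∧ α - k - (γ - l) = 0
    · rw [if_pos h1, if_pos h2, min_self, if_pos (by omega)]
    · rw [if_pos h1, if_neg h2, min_eq_right hr, if_neg (by omega)]
    · rw [if_neg h1, if_pos h2, min_eq_left hr, if_neg (by omega)]
    · rw [if_neg h1, if_neg h2, min_self, if_neg (by omega)]
  · intro l hl hαγ
    rw [hG0l l hl, hΓ', hSa, hSb]
    simp only [Nat.sub_zero]
    rw [min_comm (r * (α : ℝ)) (r * ((γ - l : ℕ) : ℝ)),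
      aux_inner r hr (γ - l) α, aux_term r hr _ _]
    by_cases h : (1 ≤ l ∧ l ≤ γ) ∧ α - (γ - l) = 0
    · rw [if_pos h, if_pos (by omega)]
    · rw [if_neg h, if_neg (by omega)]
  · intro k hk hγα
    rw [hGk0 k hk, hΓ, hSa, hSb]
    simp only [Nat.sub_zero]
    rw [aux_inner r hr (α - k) γ, aux_term r hr _ _]
    by_cases h : (1 ≤ k ∧ k ≤ α) ∧ γ - (α - k) = 0
    · rw [if_pos h, if_pos (by omega)]
    · rw [if_neg h, if_neg (by omega)]
end

section
/- Consider the two-species exclusion process on {−1,0,1}^ℤ with the ten rates Γ^1_{0,−1}(z), Γ^2_{1,−1}(z), Γ^1_{1,−1}(z), Γ^1_{0,0}(z), Γ^1_{1,0}(z) for z = ±1 (all other rates zero). The necessary and sufficient attractiveness conditions (for all coordinatewise-ordered (α,β) ≤ (γ,δ) in {−1,0,1}⁴, all l ≥ 0: Σ_{k'>δ−β+l} Γ^{k'}_{α,β}(z) ≤ Σ_{l'>l} Γ^{l'}_{γ,δ}(z), and for all k ≥ 0: Σ_{k'>k} Γ^{k'}_{α,β}(z) ≥ Σ_{l'>γ−α+k}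 Γ^{l'}_{γ,δ}(z)) hold if and only if, for z = ±1: Γ^2_{1,−1}(z) ∨ Γ^1_{0,0}(z) ≤ Γ^1_{0,−1}(z) ∧ Γ^1_{1,0}(z) and Γ^1_{0,−1}(z) ∨ Γ^1_{1,0}(z) ≤ Γ^1_{1,−1}(z) + Γ^2_{1,−1}(z). -/
set_option maxHeartbeats 1000000 in
/-- Attractiveness characterization for the two-species exclusion process. -/
theorem stmt17 (c01 c2 c11 c00 c10 : Bool → ℝ)
    (h01 : ∀ z, 0 ≤ c01 z) (h2 : ∀ z, 0 ≤ c2 z) (h11 : ∀ z, 0 ≤ c11 z)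
    (h00 : ∀ z, 0 ≤ c00 z) (h10 : ∀ z, 0 ≤ c10 z)
    (Γ : Bool → ℤ → ℤ → ℕ → ℝ)
    (hΓ : ∀ z α β k, Γ z α β k =
      if α = 0 ∧ β = -1 ∧ k = 1 then c01 z
      else if α = 1 ∧ β = -1 ∧ k = 2 then c2 z
      else if α = 1 ∧ β = -1 ∧ k = 1 then c11 z
      else if α = 0 ∧ β = 0 ∧ k = 1 then c00 z
      else if α = 1 ∧ β = 0 ∧ k = 1 then c10 z
      else 0)
    (S : Bool → ℤ → ℤ → ℤ → ℝ)
    (hS : ∀ z α β t, S z α β t = ∑' k' : ℕ, if t < (k' : ℤ) then Γ z α β k' else 0) :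
    (∀ z : Bool, ∀ α β γ δ : ℤ,
      α ∈ ({-1, 0, 1} : Set ℤ) → β ∈ ({-1, 0, 1} : Set ℤ) →
      γ ∈ ({-1, 0, 1} : Set ℤ) → δ ∈ ({-1, 0, 1} : Set ℤ) →
      α ≤ γ → β ≤ δ →
      (∀ l : ℕ, S z α β (δ - β + l) ≤ S z γ δ l) ∧
      (∀ k : ℕ, S z γ δ (γ - α + k) ≤ S z α β k))
    ↔ (∀ z : Bool,
        max (c2 z) (c00 z) ≤ min (c01 z) (c10 z) ∧
        max (c01 z) (c10 z) ≤ c11 z + c2 z) := by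
  have Sval : ∀ z α β (t : ℤ), S z α β t =
      (if t < 1 then
        (if α = 0 ∧ β = -1 then c01 z else if α = 1 ∧ β = -1 then c11 z
         else if α = 0 ∧ β = 0 then c00 z else if α = 1 ∧ β = 0 then c10 z else 0)
       else 0)
      + (if t < 2 ∧ α = 1 ∧ β = -1 then c2 z else 0) := by
    intro z α β t
    rw [hS, tsum_eq_sum (s := ({1, 2} : Finset ℕ))]
    · have g1 := hΓ z α β 1
      have g2 := hΓ z α β 2
      norm_num at g1 g2 ⊢
      rw [g1, g2]
      by_cases hc1 : t < 1 <;> by_cases hc2 : t < 2 <;>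
        simp [hc1, hc2, not_lt_of_gt] <;> split_ifs <;> simp_all
    · intro k hk
      simp only [Finset.mem_insert, Finset.mem_singleton, not_or] at hk
      have hz : Γ z α β k = 0 := by rw [hΓ]; simp [hk.1, hk.2]
      simp [hz]
  constructor
  · intro h z
    obtain ⟨ha1, hb1⟩ := h z 0 (-1) 1 (-1) (by norm_num) (by norm_num) (by norm_num)
      (by norm_num) (by norm_num) le_rfl
    obtain ⟨ha2, hb2⟩ := h z 1 (-1) 1 0 (by norm_num) (by norm_num) (by norm_num)
      (by norm_num) le_rfl (by norm_num)
    obtain ⟨ha3, hb3⟩ := h z 0 (-1) 0 0 (by norm_num) (by norm_num) (by norm_num)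
      (by norm_num) le_rfl (by norm_num)
    obtain ⟨ha4, hb4⟩ := h z 0 0 1 0 (by norm_num) (by norm_num) (by norm_num)
      (by norm_num) (by norm_num) le_rfl
    have e1 := ha1 0; have e2 := hb1 0
    have e3 := ha2 0; have e4 := hb2 0
    have e5 := hb3 0; have e6 := ha4 0
    simp only [Sval] at e1 e2 e3 e4 e5 e6
    norm_num at e1 e2 e3 e4 e5 e6
    refine ⟨?_, ?_⟩ <;> simp only [max_le_iff, le_min_iff]
    exacts [⟨⟨e2, e5⟩, e3, e6⟩, ⟨e1, e4⟩]
  · intro h z α β γ δ hα hβ hγ hδ hαγ hβδ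
    simp only [Set.mem_insert_iff, Set.mem_singleton_iff] at hα hβ hγ hδ
    obtain ⟨h1, h2⟩ := h z
    simp only [max_le_iff, le_min_iff] at h1 h2
    obtain ⟨⟨p1, p2⟩, ⟨p3, p4⟩⟩ := h1
    obtain ⟨p5, p6⟩ := h2
    have n01 := h01 z; have n2 := h2 z; have n11 := h11 z
    have n00 := h00 z; have n10 := h10 z
    rcases hα with rfl | rfl | rfl <;> rcases hβ with rfl | rfl | rfl <;>
      rcases hγ with rfl | rfl | rfl <;> rcases hδ with rfl | rfl | rfl <;>
      first
      | (exfalso; omega)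
      | (refine ⟨fun n => ?_, fun n => ?_⟩ <;> rcases n with _ | _ | n <;>
          simp only [Sval] <;> push_cast <;> try norm_num) <;>
        (try split_ifs) <;> first | linarith | (exfalso; omega)
end

section
/- For the attractive two-species exclusion process, the increasing coupling defined by the min-formulas allows no exchanges of discrepancies (i.e. G^{k;l}_{α,β;γ,δ}(z) = 0 whenever (α−γ)(β−δ) < 0 and |k−l| > |α−γ| ∨ |β−δ|) if and only if Γ^2_{1,−1}(z) ≤ Γ^1_{0,0}(z) for z = ±1. -/
/-- For the attractive two-species exclusion process, the increasing coupling
allows no exchanges of discrepancies iff Γ²₁,₋₁(z) ≤ Γ¹₀,₀(z) for z = ±1. -/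
theorem stmt18 (c01 c2 c11 c00 c10 : Bool → ℝ)
    (h01 : ∀ z, 0 ≤ c01 z) (h2 : ∀ z, 0 ≤ c2 z) (h11 : ∀ z, 0 ≤ c11 z)
    (h00 : ∀ z, 0 ≤ c00 z) (h10 : ∀ z, 0 ≤ c10 z)
    (hattr : ∀ z : Bool,
      max (c2 z) (c00 z) ≤ min (c01 z) (c10 z) ∧
      max (c01 z) (c10 z) ≤ c11 z + c2 z)
    (Γ : Bool → ℤ → ℤ → ℕ → ℝ)
    (hΓ : ∀ z α β k, Γ z α β k =
      if α = 0 ∧ β = -1 ∧ k = 1 then c01 z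
      else if α = 1 ∧ β = -1 ∧ k = 2 then c2 z
      else if α = 1 ∧ β = -1 ∧ k = 1 then c11 z
      else if α = 0 ∧ β = 0 ∧ k = 1 then c00 z
      else if α = 1 ∧ β = 0 ∧ k = 1 then c10 z
      else 0)
    (S : Bool → ℤ → ℤ → ℕ → ℝ)
    (hS : ∀ z α β k, S z α β k = ∑' k' : ℕ, if k < k' then Γ z α β k' else 0)
    (G : Bool → ℤ → ℤ → ℤ → ℤ → ℕ → ℕ → ℝ)
    (hG : ∀ z α β γ δ k l, 1 ≤ k → 1 ≤ l → G z α β γ δ k l =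
      min (Γ z α β k - min (Γ z α β k) (S z γ δ l - min (S z α β k) (S z γ δ l)))
          (Γ z γ δ l - min (Γ z γ δ l) (S z α β k - min (S z α β k) (S z γ δ l))))
    (hGk0 : ∀ z α β γ δ k, 1 ≤ k → G z α β γ δ k 0 =
      Γ z α β k - min (Γ z α β k) (S z γ δ 0 - min (S z α β k) (S z γ δ 0)))
    (hG0l : ∀ z α β γ δ l, 1 ≤ l → G z α β γ δ 0 l =
      Γ z γ δ l - min (Γ z γ δ l) (S z α β 0 - min (S z α β 0) (S z γ δ l)))
    (hG00 : ∀ z α β γ δ, G z α β γ δ 0 0 = 0) :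
    (∀ z : Bool, ∀ α β γ δ : ℤ,
      α ∈ ({-1, 0, 1} : Set ℤ) → β ∈ ({-1, 0, 1} : Set ℤ) →
      γ ∈ ({-1, 0, 1} : Set ℤ) → δ ∈ ({-1, 0, 1} : Set ℤ) →
      ∀ k l : ℕ, (α - γ) * (β - δ) < 0 →
        max |α - γ| |β - δ| < |(k : ℤ) - l| → G z α β γ δ k l = 0)
    ↔ (∀ z : Bool, c2 z ≤ c00 z) := by
  -- Γ vanishes unless k ∈ {1,2}
  have hΓ0 : ∀ z α β k, k ≠ 1 → k ≠ 2 → Γ z α β k = 0 := by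
    intro z α β k h1 h2
    rw [hΓ]
    simp [h1, h2]
  have hΓnn : ∀ z α β k, 0 ≤ Γ z α β k := by
    intro z α β k
    rw [hΓ]
    split_ifs <;>
      first
        | exact h01 z | exact h2 z | exact h11 z | exact h00 z | exact h10 z
        | exact le_refl 0
  -- closed form for S
  have hSval : ∀ z α β k, S z α β k =
      (if k < 1 then Γ z α β 1 else 0) + (if k < 2 then Γ z α β 2 else 0) := by
    intro z α β k
    rw [hS]
    rw [tsum_eq_sum (s := ({1, 2} : Finset ℕ)) ?_]
    · rw [Finset.sum_pair (by norm_num)]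
    · intro b hb
      simp only [Finset.mem_insert, Finset.mem_singleton, not_or] at hb
      simp [hΓ0 z α β b hb.1 hb.2]
  -- specific values
  have hΓ2 : ∀ z α β, Γ z α β 2 = if α = 1 ∧ β = -1 then c2 z else 0 := by
    intro z α β
    rw [hΓ]
    by_cases h : α = 1 ∧ β = -1 <;> simp [h]
  have hΓ001 : ∀ z, Γ z 0 0 1 = c00 z := by
    intro z; rw [hΓ]; norm_num
  have hS000 : ∀ z, S z 0 0 0 = c00 z := by
    intro z
    rw [hSval]
    have h2' : Γ z 0 0 2 = 0 := by rw [hΓ2]; norm_num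
    simp [hΓ001 z, h2']
  have hS2 : ∀ z α β k, 2 ≤ k → S z α β k = 0 := by
    intro z α β k hk
    rw [hSval]
    rw [if_neg (by omega), if_neg (by omega)]
    ring
  constructor
  · -- forward: specialize to the exchange rate
    intro h z
    have hz := h z 0 0 1 (-1) (by simp) (by simp) (by simp) (by simp) 0 2
      (by norm_num) (by norm_num)
    rw [hG0l z 0 0 1 (-1) 2 (by norm_num)] at hz
    have hΓ112 : Γ z 1 (-1) 2 = c2 z := by rw [hΓ2]; norm_num
    have hS112 : S z 1 (-1) 2 = 0 := hS2 z 1 (-1) 2 le_rfl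
    rw [hΓ112, hS000 z, hS112] at hz
    rw [min_eq_right (h00 z), sub_zero] at hz
    have := min_le_right (c2 z) (c00 z)
    have hmin : min (c2 z) (c00 z) = c2 z := by linarith
    rw [min_eq_left_iff] at hmin
    exact hmin
  · -- reverse
    intro hle z α β γ δ hα hβ hγ hδ k l hprod hmax
    simp only [Set.mem_insert_iff, Set.mem_singleton_iff] at hα hβ hγ hδ
    -- both discrepancies are nonzero
    have hαγ : α - γ ≠ 0 := by intro h; rw [h] at hprod; simp at hprod
    have hβδ : β - δ ≠ 0 := by intro h; rw [h] at hprod; simp at hprod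
    have h1max : 1 ≤ max |α - γ| |β - δ| :=
      le_trans (Int.one_le_abs hαγ) (le_max_left _ _)
    have hlt : (1 : ℤ) < |(k : ℤ) - l| := lt_of_le_of_lt h1max hmax
    rcases Nat.eq_zero_or_pos k with hk0 | hk1 <;>
      rcases Nat.eq_zero_or_pos l with hl0 | hl1
    · -- k = 0, l = 0
      subst hk0; subst hl0
      exact hG00 z α β γ δ
    · -- k = 0, 1 ≤ l
      subst hk0
      rw [hG0l z α β γ δ l hl1]
      by_cases hΓz : Γ z γ δ l = 0
      · have hX : 0 ≤ S z α β 0 - min (S z α β 0) (S z γ δ l) := by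
          have := min_le_left (S z α β 0) (S z γ δ l)
          linarith
        rw [hΓz, min_eq_left hX]
        ring
      · have hl12 : l = 1 ∨ l = 2 := by
          by_contra hc
          push_neg at hc
          exact hΓz (hΓ0 z γ δ l hc.1 hc.2)
        have hl2 : l = 2 := by
          rcases hl12 with h | h
          · exfalso; subst h; norm_num at hlt
          · exact h
        subst hl2
        have hγδ : γ = 1 ∧ δ = -1 := by
          by_contra hc
          exact hΓz (by rw [hΓ2]; simp [hc])
        obtain ⟨hγ1, hδ1⟩ := hγδ
        subst hγ1; subst hδ1
        have hmax2 : max |α - 1| |β - (-1:ℤ)| < 2 := by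
          have hcast : |((0:ℕ):ℤ) - ((2:ℕ):ℤ)| = 2 := by norm_num
          calc max |α - 1| |β - (-1:ℤ)| < |((0:ℕ):ℤ) - ((2:ℕ):ℤ)| := hmax
            _ = 2 := hcast
        have ha := abs_lt.mp (lt_of_le_of_lt (le_max_left _ _) hmax2)
        have hb := abs_lt.mp (lt_of_le_of_lt (le_max_right _ _) hmax2)
        have hα0 : α = 0 := by omega
        subst hα0
        have hβ0 : β = 0 := by
          have h2' : 0 < β - (-1) := by nlinarith
          omega
        subst hβ0
        have hΓv : Γ z 1 (-1) 2 = c2 z := by rw [hΓ2]; norm_num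
        have hSv : S z 1 (-1) 2 = 0 := hS2 z 1 (-1) 2 le_rfl
        rw [hΓv, hSv, hS000 z, min_eq_right (h00 z), sub_zero,
          min_eq_left (hle z), sub_self]
    · -- 1 ≤ k, l = 0
      subst hl0
      rw [hGk0 z α β γ δ k hk1]
      by_cases hΓz : Γ z α β k = 0
      · have hX : 0 ≤ S z γ δ 0 - min (S z α β k) (S z γ δ 0) := by
          have := min_le_right (S z α β k) (S z γ δ 0)
          linarith
        rw [hΓz, min_eq_left hX]
        ring
      · have hk12 : k = 1 ∨ k = 2 := by
          by_contra hc
          push_neg at hc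
          exact hΓz (hΓ0 z α β k hc.1 hc.2)
        have hk2 : k = 2 := by
          rcases hk12 with h | h
          · exfalso; subst h; norm_num at hlt
          · exact h
        subst hk2
        have hαβ : α = 1 ∧ β = -1 := by
          by_contra hc
          exact hΓz (by rw [hΓ2]; simp [hc])
        obtain ⟨hα1, hβ1⟩ := hαβ
        subst hα1; subst hβ1
        have hmax2 : max |(1:ℤ) - γ| |(-1:ℤ) - δ| < 2 := by
          have hcast : |((2:ℕ):ℤ) - ((0:ℕ):ℤ)| = 2 := by norm_num
          calc max |(1:ℤ) - γ| |(-1:ℤ) - δ| < |((2:ℕ):ℤ) - ((0:ℕ):ℤ)| := hmax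
            _ = 2 := hcast
        have ha := abs_lt.mp (lt_of_le_of_lt (le_max_left _ _) hmax2)
        have hb := abs_lt.mp (lt_of_le_of_lt (le_max_right _ _) hmax2)
        have hγ0 : γ = 0 := by omega
        subst hγ0
        have hδ0 : δ = 0 := by
          have h2' : (-1:ℤ) - δ < 0 := by nlinarith
          omega
        subst hδ0
        have hΓv : Γ z 1 (-1) 2 = c2 z := by rw [hΓ2]; norm_num
        have hSv : S z 1 (-1) 2 = 0 := hS2 z 1 (-1) 2 le_rfl
        rw [hΓv, hSv, hS000 z, min_eq_left (h00 z), sub_zero,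
          min_eq_left (hle z), sub_self]
    · -- 1 ≤ k, 1 ≤ l
      rw [hG z α β γ δ k l hk1 hl1]
      by_cases hΓa : Γ z α β k = 0
      · have hX : 0 ≤ S z γ δ l - min (S z α β k) (S z γ δ l) := by
          have := min_le_right (S z α β k) (S z γ δ l)
          linarith
        have ht2 : 0 ≤ Γ z γ δ l - min (Γ z γ δ l)
            (S z α β k - min (S z α β k) (S z γ δ l)) := by
          have := min_le_left (Γ z γ δ l)
            (S z α β k - min (S z α β k) (S z γ δ l))
          linarith
        rw [hΓa, min_eq_left hX, sub_self, min_eq_left ht2]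
      · by_cases hΓb : Γ z γ δ l = 0
        · have hY : 0 ≤ S z α β k - min (S z α β k) (S z γ δ l) := by
            have := min_le_left (S z α β k) (S z γ δ l)
            linarith
          have ht1 : 0 ≤ Γ z α β k - min (Γ z α β k)
              (S z γ δ l - min (S z α β k) (S z γ δ l)) := by
            have := min_le_left (Γ z α β k)
              (S z γ δ l - min (S z α β k) (S z γ δ l))
            linarith
          rw [hΓb, min_eq_left hY, sub_self, min_eq_right ht1]
        · exfalso
          have hk12 : k = 1 ∨ k = 2 := by
            by_contra hc; push_neg at hc
            exact hΓa (hΓ0 z α β k hc.1 hc.2)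
          have hl12 : l = 1 ∨ l = 2 := by
            by_contra hc; push_neg at hc
            exact hΓb (hΓ0 z γ δ l hc.1 hc.2)
          rcases hk12 with h | h <;> rcases hl12 with h' | h' <;>
            subst h <;> subst h' <;> norm_num at hlt
end

section
/- If for all (α,β,γ,δ) ∈ X⁴ and all nonnegative k,l the tail sums satisfy Σ^l_{γ,δ} ≥ Σ^{l+[α−γ]^+∨[δ−β]^+}_{α,β} and Σ^k_{α,β} ≥ Σ^{k+[γ−α]^+∨[β−δ]^+}_{γ,δ}, then for every (α,β,γ,δ) and nonnegative k,l with G^{k;l}_{α,β;γ,δ} > 0 one has −([α−γ]^+ ∨ [δ−β]^+) ≤ l−k ≤ [γ−α]^+ ∨ [β−δ]^+. -/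
private lemma key1 (Γl S1 S2 Sk : ℝ) (h0 : 0 ≤ Γl) (heq : Γl = S1 - S2)
    (h1 : S1 ≤ Sk) : Γl - min Γl (Sk - min Sk S2) ≤ 0 := by
  rw [min_eq_right (by linarith : S2 ≤ Sk), min_eq_left (by linarith : Γl ≤ Sk - S2)]
  linarith

private lemma key2 (Γl S1 S2 Sk : ℝ) (h0 : 0 ≤ Γl) (heq : Γl = S1 - S2)
    (h1 : S1 ≤ Sk) : Γl - min Γl (Sk - min S2 Sk) ≤ 0 := by
  rw [min_eq_left (by linarith : S2 ≤ Sk), min_eq_left (by linarith : Γl ≤ Sk - S2)]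
  linarith

/-- Sufficient conditions on tail sums implying the 'no exchange of
discrepancies' property of the coupling. -/
theorem stmt19 (Γ : ℤ → ℤ → ℕ → ℝ) (hΓpos : ∀ α β k, 0 ≤ Γ α β k)
    (hsum : ∀ α β, Summable (Γ α β))
    (S : ℤ → ℤ → ℕ → ℝ)
    (hS : ∀ α β k, S α β k = ∑' k' : ℕ, if k < k' then Γ α β k' else 0)
    (G : ℤ → ℤ → ℤ → ℤ → ℕ → ℕ → ℝ)
    (hG : ∀ α β γ δ : ℤ, ∀ k l : ℕ, 1 ≤ k → 1 ≤ l → G α β γ δ k l =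
      min (Γ α β k - min (Γ α β k) (S γ δ l - min (S α β k) (S γ δ l)))
          (Γ γ δ l - min (Γ γ δ l) (S α β k - min (S α β k) (S γ δ l))))
    (hGk0 : ∀ α β γ δ : ℤ, ∀ k : ℕ, 1 ≤ k → G α β γ δ k 0 =
      Γ α β k - min (Γ α β k) (S γ δ 0 - min (S α β k) (S γ δ 0)))
    (hG0l : ∀ α β γ δ : ℤ, ∀ l : ℕ, 1 ≤ l → G α β γ δ 0 l =
      Γ γ δ l - min (Γ γ δ l) (S α β 0 - min (S α β 0) (S γ δ l)))
    (hG00 : ∀ α β γ δ : ℤ, G α β γ δ 0 0 = 0)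
    (hyp : ∀ α β γ δ : ℤ, ∀ k l : ℕ,
      S α β (l + (max (max (α - γ) (δ - β)) 0).toNat) ≤ S γ δ l ∧
      S γ δ (k + (max (max (γ - α) (β - δ)) 0).toNat) ≤ S α β k) :
    ∀ α β γ δ : ℤ, ∀ k l : ℕ, 0 < G α β γ δ k l →
      -(max (max (α - γ) (δ - β)) 0) ≤ (l : ℤ) - k ∧
      (l : ℤ) - k ≤ max (max (γ - α) (β - δ)) 0 := by
  -- summability of tail pieces
  have hsub : ∀ (α β : ℤ) (k : ℕ), Summable (fun j => if k < j then Γ α β j else 0) := by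
    intro α β k
    apply Summable.of_nonneg_of_le _ _ (hsum α β)
    · intro j; split
      · exact hΓpos α β j
      · exact le_refl 0
    · intro j; split
      · exact le_refl _
      · exact hΓpos α β j
  -- monotonicity of S
  have hmono : ∀ (α β : ℤ) (k k' : ℕ), k ≤ k' → S α β k' ≤ S α β k := by
    intro α β k k' h
    rw [hS, hS]
    apply Summable.tsum_le_tsum _ (hsub α β k') (hsub α β k)
    intro j
    by_cases h1 : k' < j
    · rw [if_pos h1, if_pos (by omega : k < j)]
    · rw [if_neg h1]
      split
      · exact hΓpos α β j
      · exact le_refl 0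
  -- step identity
  have hstep : ∀ (α β : ℤ) (k : ℕ), S α β k = Γ α β (k + 1) + S α β (k + 1) := by
    intro α β k
    rw [hS, hS]
    have hgsum : Summable (fun j : ℕ => if j = k + 1 then Γ α β (k + 1) else 0) := by
      apply summable_of_ne_finset_zero (s := {k + 1})
      intro j hj
      rw [if_neg (by simpa using hj)]
    have h1 : (fun j : ℕ => if k < j then Γ α β j else 0)
        = fun j : ℕ => (if j = k + 1 then Γ α β (k + 1) else 0)
            + (if k + 1 < j then Γ α β j else 0) := by
      funext j
      by_cases h : j = k + 1
      · subst h
        rw [if_pos (by omega), if_pos rfl, if_neg (by omega), add_zero]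
      · by_cases h2 : k + 1 < j
        · rw [if_pos (by omega), if_neg h, if_pos h2, zero_add]
        · rw [if_neg (by omega), if_neg h, if_neg h2, add_zero]
    rw [h1, Summable.tsum_add hgsum (hsub α β (k + 1)), tsum_ite_eq]
  intro α β γ δ k l hpos
  set a := (max (max (α - γ) (δ - β)) 0).toNat with ha'
  set b := (max (max (γ - α) (β - δ)) 0).toNat with hb'
  have hbnd2 : l ≤ k + b := by
    by_contra hcon
    push_neg at hcon
    obtain ⟨l', rfl⟩ : ∃ l', l = l' + 1 := ⟨l - 1, by omega⟩
    have hmono1 : S γ δ l' ≤ S γ δ (k + b) := hmono γ δ _ _ (by omega)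
    have hhyp : S γ δ (k + b) ≤ S α β k := (hyp α β γ δ k 0).2
    have hΓeq : Γ γ δ (l' + 1) = S γ δ l' - S γ δ (l' + 1) := by
      have := hstep γ δ l'; linarith
    have hB : Γ γ δ (l' + 1) - min (Γ γ δ (l' + 1))
        (S α β k - min (S α β k) (S γ δ (l' + 1))) ≤ 0 :=
      key1 _ _ _ _ (hΓpos γ δ _) hΓeq (by linarith)
    rcases Nat.eq_zero_or_pos k with hk0 | hk1
    · subst hk0
      rw [hG0l α β γ δ (l' + 1) (by omega)] at hpos
      linarith
    · rw [hG α β γ δ k (l' + 1) hk1 (by omega)] at hpos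
      have := min_le_right
        (Γ α β k - min (Γ α β k) (S γ δ (l' + 1) - min (S α β k) (S γ δ (l' + 1))))
        (Γ γ δ (l' + 1) - min (Γ γ δ (l' + 1)) (S α β k - min (S α β k) (S γ δ (l' + 1))))
      linarith
  have hbnd1 : k ≤ l + a := by
    by_contra hcon
    push_neg at hcon
    obtain ⟨k', rfl⟩ : ∃ k', k = k' + 1 := ⟨k - 1, by omega⟩
    have hmono1 : S α β k' ≤ S α β (l + a) := hmono α β _ _ (by omega)
    have hhyp : S α β (l + a) ≤ S γ δ l := (hyp α β γ δ 0 l).1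
    have hΓeq : Γ α β (k' + 1) = S α β k' - S α β (k' + 1) := by
      have := hstep α β k'; linarith
    have hA : Γ α β (k' + 1) - min (Γ α β (k' + 1))
        (S γ δ l - min (S α β (k' + 1)) (S γ δ l)) ≤ 0 :=
      key2 _ _ _ _ (hΓpos α β _) hΓeq (by linarith)
    rcases Nat.eq_zero_or_pos l with hl0 | hl1
    · subst hl0
      rw [hGk0 α β γ δ (k' + 1) (by omega)] at hpos
      linarith
    · rw [hG α β γ δ (k' + 1) l (by omega) hl1] at hpos
      have := min_le_left
        (Γ α β (k' + 1) - min (Γ α β (k' + 1)) (S γ δ l - min (S α β (k' + 1)) (S γ δ l)))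
        (Γ γ δ l - min (Γ γ δ l) (S α β (k' + 1) - min (S α β (k' + 1)) (S γ δ l)))
      linarith
  have ha2 : (a : ℤ) = max (max (α - γ) (δ - β)) 0 :=
    Int.toNat_of_nonneg (le_max_right _ _)
  have hb2 : (b : ℤ) = max (max (γ - α) (β - δ)) 0 :=
    Int.toNat_of_nonneg (le_max_right _ _)
  constructor <;> omega
end
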